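/- For a bounded Vilenkin group there exists a constant c > 0 such that for every n with M_A ≤ n < M_{A+1} and all (x,y) ∈ G_m × G_m, n|K_n(x,y)| ≤ c [ ∑_{j=0}^{A} ∑_{q=0}^{j-1} ∑_{k=q}^{j-1} r_{k+1,j-1}(x,y) M_q D_{M_k}(x) ∑_{y_q=1}^{m_q-1} D_{M_k}(y − y_q e_q) + (the symmetric term with x and y interchanged) + ∑_{j=0}^{A} D_{M_j}(x) ∑_{s=0}^{j} M_s ∑_{i=s}^{j} ∑_{y_s=1}^{m_s-1} D_{M_i}(y − y_s e_s) + (the symmetric term with x and y interchanged) ]. -/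

import Mathlib

open Complex Finset

noncomputable section

/-- The generalized number system: `M 0 = 1`, `M (k+1) = m k * M k`. -/
def Mf (m : ℕ → ℕ) : ℕ → ℕ
  | 0 => 1
  | k + 1 => m k * Mf m k

/-- The generalized Rademacher function `r_k(x) = exp(2πi x_k / m_k)`. -/
def rad (m : ℕ → ℕ) (k : ℕ) (x : ∀ j, ZMod (m j)) : ℂ :=
  Complex.exp (2 * Real.pi * Complex.I * (x k).val / (m k))

/-- The Vilenkin function `ψ_n(x) = ∏ k, r_k(x)^{n_k}` where `n_k = (n / M_k) % m_k`
is the k-th digit of `n` in the generalized number system. -/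
def psi (m : ℕ → ℕ) (n : ℕ) (x : ∀ j, ZMod (m j)) : ℂ :=
  ∏ k ∈ Finset.range (n + 1), rad m k x ^ ((n / Mf m k) % m k)

/-- Vilenkin Dirichlet kernel. -/
def Dker (m : ℕ → ℕ) (n : ℕ) (x : ∀ j, ZMod (m j)) : ℂ :=
  ∑ j ∈ Finset.range n, psi m j x

/-- One-dimensional Vilenkin Fejér kernel. -/
def Fejer (m : ℕ → ℕ) (n : ℕ) (x : ∀ j, ZMod (m j)) : ℂ :=
  (n : ℂ)⁻¹ * ∑ k ∈ Finset.range n, Dker m k x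

/-- Two-dimensional Marcinkiewicz–Fejér kernel. -/
def MKer (m : ℕ → ℕ) (n : ℕ) (x y : ∀ j, ZMod (m j)) : ℂ :=
  (n : ℂ)⁻¹ * ∑ k ∈ Finset.range n, Dker m k x * Dker m k y

/-- `e_s ∈ G_m`: the element whose s-th coordinate is 1 and all others are 0. -/
def evec (m : ℕ → ℕ) (s : ℕ) : ∀ j, ZMod (m j) :=
  fun j => if j = s then 1 else 0

/-- `r_{i,n}(x,y) = ∏_{l=i}^{n} ∑_{s=0}^{m_l-1} ψ_{M_l}(x+y)^s`. -/
def rr (m : ℕ → ℕ) (i n : ℕ) (x y : ∀ j, ZMod (m j)) : ℂ :=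
  ∏ l ∈ Finset.Icc i n, ∑ s ∈ Finset.range (m l), psi m (Mf m l) (x + y) ^ s

open NNReal


namespace VA

variable {m : ℕ → ℕ}

lemma Mf_succ (m : ℕ → ℕ) (k : ℕ) : Mf m (k+1) = m k * Mf m k := rfl
lemma Mf_zero (m : ℕ → ℕ) : Mf m 0 = 1 := rfl

lemma Mf_pos (hm : ∀ k, 2 ≤ m k) : ∀ k, 0 < Mf m k
  | 0 => Nat.one_pos
  | (k+1) => Nat.mul_pos (by have := hm k; omega) (Mf_pos hm k)

lemma Mf_dvd (hm : ∀ k, 2 ≤ m k) {k l : ℕ} (h : k ≤ l) : Mf m k ∣ Mf m l := by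
  induction l with
  | zero => simp [Nat.le_zero.mp h]
  | succ l ih =>
    rcases Nat.lt_or_ge k (l+1) with h' | h'
    · exact (ih (by omega)).trans (dvd_mul_left (Mf m l) (m l))
    · have hk : k = l + 1 := by omega
      simp [hk]

lemma Mf_le_Mf (hm : ∀ k, 2 ≤ m k) {k l : ℕ} (h : k ≤ l) : Mf m k ≤ Mf m l :=
  Nat.le_of_dvd (Mf_pos hm l) (Mf_dvd hm h)

lemma two_pow_le_Mf (hm : ∀ k, 2 ≤ m k) : ∀ k, 2^k ≤ Mf m k
  | 0 => le_refl 1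
  | (k+1) => by
      have h := two_pow_le_Mf hm k
      calc 2^(k+1) = 2 * 2^k := by ring
      _ ≤ m k * Mf m k := Nat.mul_le_mul (hm k) h
      _ = Mf m (k+1) := rfl

lemma lt_Mf_of_le (hm : ∀ k, 2 ≤ m k) {n N : ℕ} (h : n < N) : n < Mf m N :=
  lt_of_lt_of_le (lt_trans h (Nat.lt_two_pow_self (n := N))) (two_pow_le_Mf hm N)

lemma Mf_eq_prod (m : ℕ → ℕ) : ∀ t, Mf m t = ∏ l ∈ range t, m l
  | 0 => rfl
  | (t+1) => by rw [Finset.prod_range_succ, ← Mf_eq_prod m t, Mf_succ]; ring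

/-- the `l`-th digit of `k` -/
def dg (m : ℕ → ℕ) (l k : ℕ) : ℕ := k / Mf m l % m l

lemma dg_lt (hm : ∀ k, 2 ≤ m k) (l k : ℕ) : dg m l k < m l :=
  Nat.mod_lt _ (by have := hm l; omega)

lemma dg_eq_zero_of_lt {l k : ℕ} (h : k < Mf m l) : dg m l k = 0 := by
  simp [dg, Nat.div_eq_of_lt h]

lemma dg_eq_zero_of_dvd (hm : ∀ k, 2 ≤ m k) {l a : ℕ} (h : Mf m (l+1) ∣ a) : dg m l a = 0 := by
  obtain ⟨c, hc⟩ := h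
  subst hc
  have h1 : Mf m (l+1) * c = Mf m l * (m l * c) := by rw [Mf_succ]; ring
  simp only [dg]
  rw [h1, Nat.mul_div_cancel_left _ (Mf_pos hm l), Nat.mul_mod_right]

lemma dg_add (hm : ∀ k, 2 ≤ m k) {j a b : ℕ} (ha : Mf m j ∣ a) (hb : b < Mf m j) (l : ℕ) :
    dg m l (a + b) = dg m l a + dg m l b := by
  rcases Nat.lt_or_ge l j with hl | hl
  · have hd : Mf m (l+1) ∣ a := (Mf_dvd hm (by omega : l + 1 ≤ j)).trans ha
    obtain ⟨c, hc⟩ := hd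
    have h0 : dg m l a = 0 := dg_eq_zero_of_dvd hm ⟨c, hc⟩
    rw [h0, zero_add]
    subst hc
    have h1 : Mf m (l+1) * c + b = b + Mf m l * (m l * c) := by rw [Mf_succ]; ring
    simp only [dg]
    rw [h1, Nat.add_mul_div_left _ _ (Mf_pos hm l), Nat.add_mul_mod_self_left]
  · have hb0 : dg m l b = 0 :=
      dg_eq_zero_of_lt (lt_of_lt_of_le hb (Mf_le_Mf hm hl))
    rw [hb0, add_zero]
    obtain ⟨c, hc⟩ := ha
    obtain ⟨f, hf⟩ := Mf_dvd hm hl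
    subst hc
    have h2 : (Mf m j * c + b) / (Mf m j * f) = c / f := by
      rw [← Nat.div_div_eq_div_mul, add_comm, Nat.add_mul_div_left _ _ (Mf_pos hm j),
        Nat.div_eq_of_lt hb, zero_add]
    have h3 : Mf m j * c / (Mf m j * f) = c / f := Nat.mul_div_mul_left _ _ (Mf_pos hm j)
    simp only [dg]
    rw [hf, h2, h3]

lemma dg_mul_Mf (hm : ∀ k, 2 ≤ m k) {p j : ℕ} (hp : p < m j) (l : ℕ) :
    dg m l (p * Mf m j) = if l = j then p else 0 := by
  rcases lt_trichotomy l j with hl | hl | hl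
  · rw [if_neg (by omega)]
    exact dg_eq_zero_of_dvd hm ((Mf_dvd hm (by omega : l + 1 ≤ j)).trans (dvd_mul_left _ _))
  · subst hl
    rw [if_pos rfl]
    simp only [dg]
    rw [Nat.mul_div_cancel _ (Mf_pos hm l), Nat.mod_eq_of_lt hp]
  · rw [if_neg (by omega)]
    apply dg_eq_zero_of_lt
    calc p * Mf m j < m j * Mf m j := by
          exact (Nat.mul_lt_mul_right (Mf_pos hm j)).mpr hp
    _ = Mf m (j+1) := rfl
    _ ≤ Mf m l := Mf_le_Mf hm hl

lemma pow_mod_eq {M : Type*} [Monoid M] {z : M} {n : ℕ} (h : z ^ n = 1) (a : ℕ) :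
    z ^ a = z ^ (a % n) := by
  conv_lhs => rw [← Nat.div_add_mod a n]
  rw [pow_add, pow_mul, h, one_pow, one_mul]

lemma rad_eq (m : ℕ → ℕ) (k : ℕ) (x : ∀ j, ZMod (m j)) :
    rad m k x = Complex.exp (2 * Real.pi * Complex.I / (m k)) ^ ((x k).val) := by
  rw [← Complex.exp_nat_mul]
  unfold rad
  congr 1
  ring

lemma zeta_pow_m (hm : ∀ k, 2 ≤ m k) (k : ℕ) :
    Complex.exp (2 * Real.pi * Complex.I / (m k)) ^ (m k) = 1 := by
  rw [← Complex.exp_nat_mul]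
  have hne : (m k : ℂ) ≠ 0 := Nat.cast_ne_zero.mpr (by have := hm k; omega)
  rw [show (m k : ℂ) * (2 * Real.pi * Complex.I / (m k)) = 2 * Real.pi * Complex.I by
    field_simp]
  exact Complex.exp_two_pi_mul_I

lemma rad_pow_m (hm : ∀ k, 2 ≤ m k) (k : ℕ) (x : ∀ j, ZMod (m j)) :
    rad m k x ^ (m k) = 1 := by
  rw [rad_eq, ← pow_mul, mul_comm ((x k).val) (m k), pow_mul, zeta_pow_m hm, one_pow]

lemma rad_add (hm : ∀ k, 2 ≤ m k) (k : ℕ) (x y : ∀ j, ZMod (m j)) :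
    rad m k (x + y) = rad m k x * rad m k y := by
  haveI : NeZero (m k) := ⟨by have := hm k; omega⟩
  rw [rad_eq, rad_eq, rad_eq, ← pow_add]
  have hxy : (x + y) k = x k + y k := rfl
  rw [hxy, ZMod.val_add]
  exact (pow_mod_eq (zeta_pow_m hm k) _).symm

lemma rad_eq_one (hm : ∀ k, 2 ≤ m k) {k : ℕ} {x : ∀ j, ZMod (m j)} (h : x k = 0) :
    rad m k x = 1 := by
  haveI : NeZero (m k) := ⟨by have := hm k; omega⟩
  rw [rad_eq, h, ZMod.val_zero, pow_zero]

lemma nnnorm_rad (m : ℕ → ℕ) (k : ℕ) (x : ∀ j, ZMod (m j)) : ‖rad m k x‖₊ = 1 := by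
  have h : ‖rad m k x‖ = 1 := by
    unfold rad
    rw [show 2 * (Real.pi : ℂ) * Complex.I * ((x k).val : ℕ) / (m k)
        = ((2 * Real.pi * ((x k).val : ℕ) / (m k) : ℝ) : ℂ) * Complex.I by push_cast; ring]
    exact Complex.norm_exp_ofReal_mul_I _
  ext
  simp [coe_nnnorm, h]

lemma rad_ne_one (hm : ∀ k, 2 ≤ m k) {k : ℕ} {x : ∀ j, ZMod (m j)} (h : x k ≠ 0) :
    rad m k x ≠ 1 := by
  haveI : NeZero (m k) := ⟨by have := hm k; omega⟩
  rw [rad_eq]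
  intro hc
  set v := (x k).val with hv
  have hv0 : 0 < v := Nat.pos_of_ne_zero (fun h0 => h ((ZMod.val_eq_zero _).mp h0))
  have hvm : v < m k := ZMod.val_lt _
  rw [← Complex.exp_nat_mul] at hc
  obtain ⟨t, ht⟩ := Complex.exp_eq_one_iff.mp hc
  have hm0 : (m k : ℂ) ≠ 0 := Nat.cast_ne_zero.mpr (by have := hm k; omega)
  have hpi : (2 * (Real.pi : ℂ) * Complex.I) ≠ 0 := by
    simp [Real.pi_ne_zero, Complex.I_ne_zero, two_ne_zero]
  have h2 : (v : ℂ) * (2 * Real.pi * Complex.I) = (t * m k) * (2 * Real.pi * Complex.I) := by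
    field_simp at ht
    linear_combination (2 * Real.pi * Complex.I) * ht
  have hveq : (v : ℂ) = (t * m k : ℤ) := by
    push_cast
    exact mul_right_cancel₀ hpi h2
  have hint : (v : ℤ) = t * m k := by exact_mod_cast hveq
  have hdvd : (m k : ℤ) ∣ (v : ℤ) := ⟨t, by rw [hint, mul_comm]⟩
  have := Int.le_of_dvd (by exact_mod_cast hv0) hdvd
  omega

lemma geom_rad (hm : ∀ k, 2 ≤ m k) (k : ℕ) (w : ∀ j, ZMod (m j)) :
    ∑ s ∈ range (m k), rad m k w ^ s = if w k = 0 then (m k : ℂ) else 0 := by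
  by_cases h : w k = 0
  · rw [if_pos h]
    simp [rad_eq_one hm h]
  · rw [if_neg h]
    rw [geom_sum_eq (rad_ne_one hm h), rad_pow_m hm, sub_self, zero_div]

lemma psi_eq_prod (hm : ∀ k, 2 ≤ m k) {n N : ℕ} (h : n < Mf m N) (x : ∀ j, ZMod (m j)) :
    psi m n x = ∏ k ∈ range N, rad m k x ^ dg m k n := by
  have base : ∀ N₁ N₂ : ℕ, N₁ ≤ N₂ → n < Mf m N₁ →
      (∏ k ∈ range N₁, rad m k x ^ dg m k n) = ∏ k ∈ range N₂, rad m k x ^ dg m k n := by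
    intro N₁ N₂ hle hlt
    apply Finset.prod_subset (Finset.range_subset_range.mpr hle)
    intro k hk hk'
    have hNk : N₁ ≤ k := by
      by_contra hcon
      exact hk' (Finset.mem_range.mpr (by omega))
    have : n < Mf m k := lt_of_lt_of_le hlt (Mf_le_Mf hm hNk)
    rw [dg_eq_zero_of_lt this, pow_zero]
  have hpsi : psi m n x = ∏ k ∈ range (n+1), rad m k x ^ dg m k n := rfl
  rcases le_total (n+1) N with hc | hc
  · rw [hpsi]; exact base _ _ hc (lt_Mf_of_le hm (by omega))
  · rw [hpsi]; exact (base N (n+1) hc h).symm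

lemma psi_add (hm : ∀ k, 2 ≤ m k) {j a b : ℕ} (ha : Mf m j ∣ a) (hb : b < Mf m j)
    (x : ∀ j, ZMod (m j)) : psi m (a + b) x = psi m a x * psi m b x := by
  have hN : a + b < Mf m (a + b + 1) := lt_Mf_of_le hm (by omega)
  rw [psi_eq_prod hm hN, psi_eq_prod hm (lt_of_le_of_lt (Nat.le_add_right a b) hN),
    psi_eq_prod hm (lt_of_le_of_lt (Nat.le_add_left b a) hN), ← Finset.prod_mul_distrib]
  apply Finset.prod_congr rfl
  intro l _
  rw [dg_add hm ha hb l, pow_add]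

lemma psi_mul_Mf (hm : ∀ k, 2 ≤ m k) {p j : ℕ} (hp : p < m j) (x : ∀ j, ZMod (m j)) :
    psi m (p * Mf m j) x = rad m j x ^ p := by
  have h1 : p * Mf m j < Mf m (max (j+1) (p * Mf m j + 1)) :=
    lt_Mf_of_le hm (by omega)
  rw [psi_eq_prod hm h1]
  rw [Finset.prod_eq_single_of_mem j (Finset.mem_range.mpr (by omega))]
  · rw [dg_mul_Mf hm hp, if_pos rfl]
  · intro l _ hlj
    rw [dg_mul_Mf hm hp, if_neg hlj, pow_zero]

lemma psi_Mf (hm : ∀ k, 2 ≤ m k) (l : ℕ) (w : ∀ j, ZMod (m j)) :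
    psi m (Mf m l) w = rad m l w := by
  have := psi_mul_Mf hm (show 1 < m l by have := hm l; omega) (x := w) (j := l)
  simpa using this

lemma sum_range_mul_nat {M : Type*} [AddCommMonoid M] (f : ℕ → M) (d c : ℕ) :
    ∑ k ∈ range (d * c), f k = ∑ p ∈ range d, ∑ u ∈ range c, f (p * c + u) := by
  induction d with
  | zero => simp
  | succ d ih =>
    rw [Nat.succ_mul, Finset.sum_range_add, ih, Finset.sum_range_succ]

lemma prod_dg_split (hm : ∀ k, 2 ≤ m k) {t p u : ℕ} (hp : p < m t) (hu : u < Mf m t)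
    (g : ℕ → ℕ → ℂ) :
    ∏ l ∈ range (t+1), g l (dg m l (p * Mf m t + u)) =
      (∏ l ∈ range t, g l (dg m l u)) * g t p := by
  rw [Finset.prod_range_succ]
  congr 1
  · apply Finset.prod_congr rfl
    intro l hl
    have hl' : l < t := Finset.mem_range.mp hl
    rw [dg_add hm (dvd_mul_left _ _) hu, dg_mul_Mf hm hp, if_neg (by omega), zero_add]
  · rw [dg_add hm (dvd_mul_left _ _) hu, dg_mul_Mf hm hp, if_pos rfl,
      dg_eq_zero_of_lt hu, add_zero]

lemma sum_prod_dg (hm : ∀ k, 2 ≤ m k) (g : ℕ → ℕ → ℂ) :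
    ∀ t, ∑ k ∈ range (Mf m t), ∏ l ∈ range t, g l (dg m l k)
      = ∏ l ∈ range t, ∑ s ∈ range (m l), g l s
  | 0 => by simp [Mf_zero]
  | (t+1) => by
    rw [show Mf m (t+1) = m t * Mf m t from rfl, sum_range_mul_nat, Finset.prod_range_succ,
      ← sum_prod_dg hm g t]
    have hstep : ∀ p ∈ range (m t),
        ∑ u ∈ range (Mf m t), ∏ l ∈ range (t+1), g l (dg m l (p * Mf m t + u))
        = (∑ u ∈ range (Mf m t), ∏ l ∈ range t, g l (dg m l u)) * g t p := by
      intro p hp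
      have h1 := Finset.sum_congr rfl fun u (hu : u ∈ range (Mf m t)) =>
        prod_dg_split hm (Finset.mem_range.mp hp) (Finset.mem_range.mp hu) g
      rw [h1, ← Finset.sum_mul]
    rw [Finset.sum_congr rfl hstep, ← Finset.mul_sum]

lemma Dker_mul_Mf (hm : ∀ k, 2 ≤ m k) {d j : ℕ} (hd : d ≤ m j) (x : ∀ j, ZMod (m j)) :
    Dker m (d * Mf m j) x = (∑ p ∈ range d, rad m j x ^ p) * Dker m (Mf m j) x := by
  unfold Dker
  rw [sum_range_mul_nat]
  have hstep : ∀ p ∈ range d,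
      ∑ u ∈ range (Mf m j), psi m (p * Mf m j + u) x
      = rad m j x ^ p * ∑ u ∈ range (Mf m j), psi m u x := by
    intro p hp
    have h1 : ∀ u ∈ range (Mf m j),
        psi m (p * Mf m j + u) x = rad m j x ^ p * psi m u x := by
      intro u hu
      rw [psi_add hm (dvd_mul_left _ _) (Finset.mem_range.mp hu),
        psi_mul_Mf hm (lt_of_lt_of_le (Finset.mem_range.mp hp) hd)]
    rw [Finset.sum_congr rfl h1, Finset.mul_sum]
  rw [Finset.sum_congr rfl hstep, ← Finset.sum_mul]

lemma Dker_Mf_eq (hm : ∀ k, 2 ≤ m k) (t : ℕ) (w : ∀ j, ZMod (m j)) :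
    Dker m (Mf m t) w = if ∀ l, l < t → w l = 0 then (Mf m t : ℂ) else 0 := by
  have h1 : Dker m (Mf m t) w = ∏ l ∈ range t, ∑ s ∈ range (m l), rad m l w ^ s := by
    unfold Dker
    rw [← sum_prod_dg hm (fun l s => rad m l w ^ s) t]
    exact Finset.sum_congr rfl fun k hk => psi_eq_prod hm (Finset.mem_range.mp hk) w
  rw [h1, Finset.prod_congr rfl (fun l _ => geom_rad hm l w)]
  by_cases h : ∀ l, l < t → w l = 0
  · rw [if_pos h, Finset.prod_congr rfl (fun l hl => if_pos (h l (Finset.mem_range.mp hl))),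
      Mf_eq_prod]
    push_cast
    rfl
  · rw [if_neg h]
    push_neg at h
    obtain ⟨l0, hl0, hw⟩ := h
    exact Finset.prod_eq_zero (Finset.mem_range.mpr hl0) (by rw [if_neg hw])

lemma nn_Dker_Mf (hm : ∀ k, 2 ≤ m k) (t : ℕ) (w : ∀ j, ZMod (m j)) :
    ‖Dker m (Mf m t) w‖₊ = if ∀ l, l < t → w l = 0 then (Mf m t : ℝ≥0) else 0 := by
  rw [Dker_Mf_eq hm]
  split
  · ext; simp [coe_nnnorm]
  · simp

/-- `k` with its digits below `j` zeroed out. -/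
def high (m : ℕ → ℕ) (j k : ℕ) : ℕ := Mf m j * (k / Mf m j)

lemma high_le (m : ℕ → ℕ) (j k : ℕ) : high m j k ≤ k := by
  rw [high, mul_comm]
  exact Nat.div_mul_le_self k (Mf m j)

lemma high_succ (hm : ∀ k, 2 ≤ m k) (j k : ℕ) :
    high m j k = high m (j+1) k + dg m j k * Mf m j := by
  have h1 : k / Mf m (j+1) = k / Mf m j / m j := by
    rw [Mf_succ, mul_comm, Nat.div_div_eq_div_mul]
  simp only [high, dg]
  rw [h1, Mf_succ]
  have h2 := Nat.div_add_mod (k / Mf m j) (m j)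
  calc Mf m j * (k / Mf m j)
      = Mf m j * (m j * (k / Mf m j / m j) + k / Mf m j % m j) := by rw [h2]
  _ = m j * Mf m j * (k / Mf m j / m j) + k / Mf m j % m j * Mf m j := by ring

lemma dg_high (hm : ∀ k, 2 ≤ m k) (j k l : ℕ) :
    dg m l (high m j k) = if l < j then 0 else dg m l k := by
  split
  · exact dg_eq_zero_of_dvd hm ((Mf_dvd hm (by omega)).trans ⟨k / Mf m j, rfl⟩)
  · rename_i hl
    have hjl : j ≤ l := by omega
    obtain ⟨f, hf⟩ := Mf_dvd hm hjl
    simp only [dg, high]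
    rw [hf, Nat.mul_div_mul_left _ _ (Mf_pos hm j), ← Nat.div_div_eq_div_mul]

lemma Dker_eq_sum (hm : ∀ k, 2 ≤ m k) (A : ℕ) (x : ∀ j, ZMod (m j)) {k : ℕ}
    (hk : k < Mf m (A+1)) :
    Dker m k x = ∑ j ∈ range (A+1),
      psi m (high m (j+1) k) x *
        ((∑ p ∈ range (dg m j k), rad m j x ^ p) * Dker m (Mf m j) x) := by
  have tele := Finset.sum_range_sub' (fun j => Dker m (high m j k) x) (A+1)
  have h0 : high m 0 k = k := by simp [high, Mf_zero]
  have hA : high m (A+1) k = 0 := by simp [high, Nat.div_eq_of_lt hk]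
  have hD : Dker m k x
      = ∑ j ∈ range (A+1), (Dker m (high m j k) x - Dker m (high m (j+1) k) x) := by
    rw [tele]
    simp only [h0, hA]
    simp [Dker]
  rw [hD]
  apply Finset.sum_congr rfl
  intro j _
  have hsucc := high_succ hm j k
  have hdglt : dg m j k * Mf m j ≤ Mf m (j+1) := by
    rw [Mf_succ]
    exact Nat.mul_le_mul_right _ (le_of_lt (dg_lt hm j k))
  have hsub : Dker m (high m j k) x - Dker m (high m (j+1) k) x
      = ∑ u ∈ range (dg m j k * Mf m j), psi m (high m (j+1) k + u) x := by
    unfold Dker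
    rw [hsucc, Finset.sum_range_add]
    ring
  rw [hsub]
  have hdvd : Mf m (j+1) ∣ high m (j+1) k := ⟨k / Mf m (j+1), rfl⟩
  have hstep : ∀ u ∈ range (dg m j k * Mf m j),
      psi m (high m (j+1) k + u) x = psi m (high m (j+1) k) x * psi m u x := by
    intro u hu
    exact psi_add hm hdvd (lt_of_lt_of_le (Finset.mem_range.mp hu) hdglt) x
  rw [Finset.sum_congr rfl hstep, ← Finset.mul_sum]
  congr 1
  rw [show (∑ u ∈ range (dg m j k * Mf m j), psi m u x) = Dker m (dg m j k * Mf m j) x from rfl]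
  exact Dker_mul_Mf hm (le_of_lt (dg_lt hm j k)) x

lemma core (hm : ∀ k, 2 ≤ m k) (g : ℕ → ℕ → ℂ) (β σ : ℕ → ℝ≥0)
    (hβ : ∀ l s, s < m l → ‖g l s‖₊ ≤ β l)
    (hσ : ∀ l, ‖∑ s ∈ range (m l), g l s‖₊ ≤ σ l) :
    ∀ t n, n ≤ Mf m (t+1) →
      ‖∑ k ∈ range n, ∏ l ∈ range (t+1), g l (dg m l k)‖₊ ≤
        ∑ t' ∈ range (t+1), ((m t' : ℝ≥0) * β t') * (∏ l ∈ range t', σ l) *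
          (∏ l ∈ Finset.Ioc t' t, β l)
  | 0, n => by
    intro hn
    have hMf1 : Mf m 1 = m 0 := by rw [Mf_succ, Mf_zero, mul_one]
    rw [hMf1] at hn
    have h1 : ∀ k ∈ range n, (∏ l ∈ range 1, g l (dg m l k)) = g 0 k := by
      intro k hk
      rw [Finset.prod_range_one]
      congr 1
      simp only [dg, Mf_zero, Nat.div_one]
      exact Nat.mod_eq_of_lt (lt_of_lt_of_le (Finset.mem_range.mp hk) hn)
    rw [Finset.sum_congr rfl h1]
    refine le_trans (nnnorm_sum_le _ _) ?_
    rw [Finset.sum_range_one, Finset.range_zero, Finset.prod_empty, Finset.Ioc_self,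
      Finset.prod_empty, mul_one, mul_one]
    calc ∑ k ∈ range n, ‖g 0 k‖₊ ≤ ∑ k ∈ range n, β 0 :=
          Finset.sum_le_sum fun k hk => hβ 0 k (lt_of_lt_of_le (Finset.mem_range.mp hk) hn)
    _ = n * β 0 := by rw [Finset.sum_const, Finset.card_range]; simp
    _ ≤ (m 0 : ℝ≥0) * β 0 := by
          apply mul_le_mul_left
          exact_mod_cast hn
  | (t+1), n => by
    intro hn
    set c := n / Mf m (t+1) with hc
    set r := n % Mf m (t+1) with hr
    have hrlt : r < Mf m (t+1) := Nat.mod_lt _ (Mf_pos hm (t+1))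
    have hcle : c ≤ m (t+1) := by
      rw [hc]
      calc n / Mf m (t+1) ≤ Mf m (t+2) / Mf m (t+1) := Nat.div_le_div_right hn
      _ = m (t+1) := by rw [Mf_succ]; exact Nat.mul_div_cancel _ (Mf_pos hm (t+1))
    have hn' : n = c * Mf m (t+1) + r := by rw [hc, hr, mul_comm]; exact (Nat.div_add_mod n _).symm
    rw [hn', Finset.sum_range_add]
    refine le_trans (nnnorm_add_le _ _) ?_
    rw [Finset.sum_range_succ]
    have part1 : ‖∑ k ∈ range (c * Mf m (t+1)), ∏ l ∈ range (t+2), g l (dg m l k)‖₊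
        ≤ ((m (t+1) : ℝ≥0) * β (t+1)) * (∏ l ∈ range (t+1), σ l) *
            (∏ l ∈ Finset.Ioc (t+1) (t+1), β l) := by
      rw [sum_range_mul_nat]
      have h1 : ∀ p ∈ range c,
          ∑ u ∈ range (Mf m (t+1)), ∏ l ∈ range (t+2), g l (dg m l (p * Mf m (t+1) + u))
          = (∑ u ∈ range (Mf m (t+1)), ∏ l ∈ range (t+1), g l (dg m l u)) * g (t+1) p := by
        intro p hp
        have h2 := Finset.sum_congr rfl fun u (hu : u ∈ range (Mf m (t+1))) =>
          prod_dg_split hm (lt_of_lt_of_le (Finset.mem_range.mp hp) hcle)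
            (Finset.mem_range.mp hu) g
        rw [h2, ← Finset.sum_mul]
      rw [Finset.sum_congr rfl h1, ← Finset.mul_sum, sum_prod_dg hm g (t+1)]
      rw [Finset.Ioc_self, Finset.prod_empty, mul_one]
      rw [nnnorm_mul]
      rw [mul_comm ((m (t+1) : ℝ≥0) * β (t+1)) _]
      apply mul_le_mul'
      · rw [nnnorm_prod]
        exact Finset.prod_le_prod' fun l _ => hσ l
      · refine le_trans (nnnorm_sum_le _ _) ?_
        calc ∑ p ∈ range c, ‖g (t+1) p‖₊ ≤ ∑ p ∈ range c, β (t+1) :=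
              Finset.sum_le_sum fun p hp => hβ _ _ (lt_of_lt_of_le (Finset.mem_range.mp hp) hcle)
        _ = c * β (t+1) := by rw [Finset.sum_const, Finset.card_range]; simp
        _ ≤ (m (t+1) : ℝ≥0) * β (t+1) := by
              apply mul_le_mul_left
              exact_mod_cast hcle
    have part2 : ‖∑ u ∈ range r, ∏ l ∈ range (t+2), g l (dg m l (c * Mf m (t+1) + u))‖₊
        ≤ ∑ t' ∈ range (t+1), ((m t' : ℝ≥0) * β t') * (∏ l ∈ range t', σ l) *
            (∏ l ∈ Finset.Ioc t' (t+1), β l) := by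
      rcases Nat.eq_zero_or_pos r with hr0 | hr0
      · rw [hr0]
        simp
      · have hclt : c < m (t+1) := by
          rcases Nat.lt_or_ge c (m (t+1)) with h | h
          · exact h
          · exfalso
            have : c = m (t+1) := le_antisymm hcle h
            rw [this] at hn'
            have h2 : Mf m (t+1+1) = m (t+1) * Mf m (t+1) := rfl
            omega
        have h1 := Finset.sum_congr rfl fun u (hu : u ∈ range r) =>
          prod_dg_split hm hclt (lt_trans (Finset.mem_range.mp hu) hrlt) g
        rw [h1, ← Finset.sum_mul, nnnorm_mul]
        have h2 := core hm g β σ hβ hσ t r (le_of_lt hrlt)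
        calc ‖∑ u ∈ range r, ∏ l ∈ range (t+1), g l (dg m l u)‖₊ * ‖g (t+1) c‖₊
            ≤ (∑ t' ∈ range (t+1), ((m t' : ℝ≥0) * β t') * (∏ l ∈ range t', σ l) *
                (∏ l ∈ Finset.Ioc t' t, β l)) * β (t+1) :=
              mul_le_mul' h2 (hβ _ _ hclt)
        _ = ∑ t' ∈ range (t+1), ((m t' : ℝ≥0) * β t') * (∏ l ∈ range t', σ l) *
              (∏ l ∈ Finset.Ioc t' (t+1), β l) := by
              rw [Finset.sum_mul]
              apply Finset.sum_congr rfl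
              intro t' ht'
              have ht'' : t' ≤ t := by
                have := Finset.mem_range.mp ht'
                omega
              rw [Finset.prod_Ioc_succ_top ht'' β]
              ring
    calc ‖∑ k ∈ range (c * Mf m (t+1)), ∏ l ∈ range (t+2), g l (dg m l k)‖₊ +
          ‖∑ u ∈ range r, ∏ l ∈ range (t+2), g l (dg m l (c * Mf m (t+1) + u))‖₊
        ≤ ((m (t+1) : ℝ≥0) * β (t+1)) * (∏ l ∈ range (t+1), σ l) *
            (∏ l ∈ Finset.Ioc (t+1) (t+1), β l) +
          ∑ t' ∈ range (t+1), ((m t' : ℝ≥0) * β t') * (∏ l ∈ range t', σ l) *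
            (∏ l ∈ Finset.Ioc t' (t+1), β l) := add_le_add part1 part2
    _ = ∑ t' ∈ range (t+1), ((m t' : ℝ≥0) * β t') * (∏ l ∈ range t', σ l) *
          (∏ l ∈ Finset.Ioc t' (t+1), β l) +
        ((m (t+1) : ℝ≥0) * β (t+1)) * (∏ l ∈ range (t+1), σ l) *
          (∏ l ∈ Finset.Ioc (t+1) (t+1), β l) := by ring

/-- indicator-type abbreviation used everywhere below -/
def Qf (m : ℕ → ℕ) (x y : ∀ j, ZMod (m j)) (i j t' : ℕ) : ℝ≥0 :=
  ∏ l ∈ (range t').filter (fun l => ¬(l = j ∨ l = i)),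
    ((m l : ℝ≥0) * if (x + y) l = 0 then 1 else 0)

lemma Qf_comm (m : ℕ → ℕ) (x y : ∀ j, ZMod (m j)) (i j t' : ℕ) :
    Qf m x y i j t' = Qf m y x j i t' := by
  unfold Qf
  rw [add_comm y x]
  apply Finset.prod_congr
  · apply Finset.filter_congr
    intro l _
    simp [or_comm]
  · intros; rfl

lemma rr_comm (m : ℕ → ℕ) (a b : ℕ) (x y : ∀ j, ZMod (m j)) :
    rr m a b y x = rr m a b x y := by
  unfold rr
  rw [add_comm y x]

lemma Mf_cast_prod (m : ℕ → ℕ) (t : ℕ) : (Mf m t : ℝ≥0) = ∏ l ∈ range t, (m l : ℝ≥0) := by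
  rw [Mf_eq_prod]
  push_cast
  rfl

lemma prod_ind (S : Finset ℕ) (p : ℕ → Prop) [DecidablePred p] :
    ∏ l ∈ S, (if p l then (1 : ℝ≥0) else 0) = if ∀ l ∈ S, p l then 1 else 0 := by
  by_cases h : ∀ l ∈ S, p l
  · rw [if_pos h]
    exact Finset.prod_eq_one fun l hl => if_pos (h l hl)
  · rw [if_neg h]
    push_neg at h
    obtain ⟨l₀, hl₀, hp⟩ := h
    exact Finset.prod_eq_zero hl₀ (if_neg hp)

lemma filter_or_card (S : Finset ℕ) (i j : ℕ) :
    ((S.filter fun l => l = j ∨ l = i).card) ≤ 2 := by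
  calc (S.filter fun l => l = j ∨ l = i).card ≤ ({j, i} : Finset ℕ).card := by
        apply Finset.card_le_card
        intro l hl
        simp only [Finset.mem_filter] at hl
        simp [hl.2]
  _ ≤ 2 := Finset.card_insert_le _ _ |>.trans (by simp)

lemma prod_ite_le_sq {c : ℝ≥0} (hc : 1 ≤ c) (S : Finset ℕ) (i j : ℕ) :
    (∏ l ∈ S, if l = j ∨ l = i then c else 1) ≤ c ^ 2 := by
  rw [Finset.prod_ite, Finset.prod_const, Finset.prod_const, one_pow, mul_one]
  exact pow_le_pow_right₀ hc (filter_or_card S i j)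

lemma sum_range_split (f : ℕ → ℝ≥0) {j A : ℕ} (h : j ≤ A) :
    ∑ i ∈ range (A+1), f i = (∑ i ∈ range (j+1), f i) + ∑ i ∈ Finset.Ioc j A, f i := by
  have h1 : Finset.range (A+1) = Finset.range (j+1) ∪ Finset.Ioc j A := by
    ext l
    simp only [Finset.mem_range, Finset.mem_union, Finset.mem_Ioc]
    omega
  rw [h1, Finset.sum_union]
  rw [Finset.disjoint_left]
  intro l h1 h2
  simp only [Finset.mem_range] at h1
  simp only [Finset.mem_Ioc] at h2
  omega

lemma tri (F : ℕ → ℕ → ℝ≥0) (N : ℕ) :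
    ∑ a ∈ range (N+1), ∑ b ∈ Finset.Ioc a N, F a b
      = ∑ b ∈ range (N+1), ∑ a ∈ range b, F a b := by
  have h1 : ∀ a, Finset.Ioc a N = (range (N+1)).filter (fun b => a < b) := by
    intro a
    ext b
    simp only [Finset.mem_Ioc, Finset.mem_filter, Finset.mem_range]
    omega
  have h2 : ∀ b ∈ range (N+1), (range (N+1)).filter (fun a => a < b) = range b := by
    intro b hb
    have hb' := Finset.mem_range.mp hb
    ext a
    simp only [Finset.mem_filter, Finset.mem_range]
    omega
  calc ∑ a ∈ range (N+1), ∑ b ∈ Finset.Ioc a N, F a b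
      = ∑ a ∈ range (N+1), ∑ b ∈ range (N+1), if a < b then F a b else 0 := by
        apply Finset.sum_congr rfl
        intro a _
        rw [h1 a, Finset.sum_filter]
  _ = ∑ b ∈ range (N+1), ∑ a ∈ range (N+1), if a < b then F a b else 0 := Finset.sum_comm
  _ = ∑ b ∈ range (N+1), ∑ a ∈ range b, F a b := by
        apply Finset.sum_congr rfl
        intro b hb
        rw [← Finset.sum_filter, h2 b hb]

lemma sum_Mf_le (hm : ∀ k, 2 ≤ m k) : ∀ s : ℕ, ∑ t ∈ range (s+1), Mf m t ≤ 2 * Mf m s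
  | 0 => by simp [Mf_zero]
  | (s+1) => by
    rw [Finset.sum_range_succ]
    have h1 := sum_Mf_le hm s
    have h2 : 2 * Mf m s ≤ Mf m (s+1) := by
      rw [Mf_succ]
      exact Nat.mul_le_mul_right _ (hm s)
    omega

lemma sum_Mf_le' (hm : ∀ k, 2 ≤ m k) (s : ℕ) :
    ∑ t ∈ range (s+1), (Mf m t : ℝ≥0) ≤ 2 * (Mf m s : ℝ≥0) := by
  have := sum_Mf_le hm s
  have hcast : ((∑ t ∈ range (s+1), Mf m t : ℕ) : ℝ≥0) ≤ ((2 * Mf m s : ℕ) : ℝ≥0) := by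
    exact_mod_cast this
  push_cast at hcast
  exact hcast

lemma Mf_factor (hm : ∀ k, 2 ≤ m k) {i t : ℕ} (h : i < t) :
    Mf m t = Mf m (i+1) * ∏ l ∈ Finset.Ioo i t, m l := by
  have h1 : Finset.Ioo i t = Finset.Ico (i+1) t := by
    ext a
    simp only [Finset.mem_Ioo, Finset.mem_Ico]
    omega
  rw [h1, Mf_eq_prod, Mf_eq_prod, Finset.range_eq_Ico,
    ← Finset.prod_Ico_consecutive _ (by omega : 0 ≤ i+1) (by omega : i+1 ≤ t)]
  rw [Finset.range_eq_Ico]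

lemma key_sum_nat (hm : ∀ k, 2 ≤ m k) (t : ℕ) :
    ∑ i ∈ range t, (Mf m i)^2 * ∏ l ∈ Finset.Ioo i t, m l ≤ (Mf m t)^2 := by
  have hper : ∀ i ∈ range t, 2 * ((Mf m i)^2 * ∏ l ∈ Finset.Ioo i t, m l) ≤ Mf m i * Mf m t := by
    intro i hi
    have hi' := Finset.mem_range.mp hi
    have h1 : Mf m t = Mf m (i+1) * ∏ l ∈ Finset.Ioo i t, m l := Mf_factor hm hi'
    calc 2 * ((Mf m i)^2 * ∏ l ∈ Finset.Ioo i t, m l)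
        = Mf m i * ((2 * Mf m i) * ∏ l ∈ Finset.Ioo i t, m l) := by ring
    _ ≤ Mf m i * ((m i * Mf m i) * ∏ l ∈ Finset.Ioo i t, m l) := by
        apply Nat.mul_le_mul_left
        apply Nat.mul_le_mul_right
        exact Nat.mul_le_mul_right _ (hm i)
    _ = Mf m i * Mf m t := by rw [h1, Mf_succ]
  have h2 : 2 * ∑ i ∈ range t, (Mf m i)^2 * ∏ l ∈ Finset.Ioo i t, m l
      ≤ ∑ i ∈ range t, Mf m i * Mf m t := by
    rw [Finset.mul_sum]
    exact Finset.sum_le_sum hper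
  have h3 : ∑ i ∈ range t, Mf m i * Mf m t ≤ 2 * (Mf m t)^2 := by
    rw [← Finset.sum_mul]
    have h4 : ∑ i ∈ range t, Mf m i ≤ 2 * Mf m t := by
      rcases Nat.eq_zero_or_pos t with h | h
      · simp [h]
      · calc ∑ i ∈ range t, Mf m i ≤ ∑ i ∈ range (t+1), Mf m i := by
              apply Finset.sum_le_sum_of_subset
              exact Finset.range_subset_range.mpr (by omega)
        _ ≤ 2 * Mf m t := sum_Mf_le hm t
    calc (∑ i ∈ range t, Mf m i) * Mf m t ≤ (2 * Mf m t) * Mf m t :=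
          Nat.mul_le_mul_right _ h4
    _ = 2 * (Mf m t)^2 := by ring
  omega

lemma key_sum (hm : ∀ k, 2 ≤ m k) (t : ℕ) :
    ∑ i ∈ range t, (Mf m i : ℝ≥0)^2 * ∏ l ∈ Finset.Ioo i t, (m l : ℝ≥0) ≤ (Mf m t : ℝ≥0)^2 := by
  have := key_sum_nat hm t
  have hcast : ((∑ i ∈ range t, (Mf m i)^2 * ∏ l ∈ Finset.Ioo i t, m l : ℕ) : ℝ≥0)
      ≤ (((Mf m t)^2 : ℕ) : ℝ≥0) := by exact_mod_cast this
  push_cast at hcast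
  exact hcast

lemma sub_evec_ne {x : ∀ j, ZMod (m j)} {v s l : ℕ} (h : l ≠ s) :
    (x - v • evec m s) l = x l := by
  have h1 : (x - v • evec m s) l = x l - v • (evec m s l) := rfl
  rw [h1]
  have h2 : evec m s l = 0 := by simp [evec, h]
  rw [h2, smul_zero, sub_zero]

lemma sub_evec_eq (hm : ∀ k, 2 ≤ m k) (x : ∀ j, ZMod (m j)) (v s : ℕ) :
    (x - v • evec m s) s = x s - (v : ZMod (m s)) := by
  have h1 : (x - v • evec m s) s = x s - v • (evec m s s) := rfl
  rw [h1]
  have h2 : evec m s s = 1 := by simp [evec]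
  rw [h2, nsmul_eq_mul, mul_one]

lemma need1 (hm : ∀ k, 2 ≤ m k) {s : ℕ} (y : ∀ j, ZMod (m j))
    (hy : ∀ l, l < s → y l = 0) (v : ℕ) :
    ‖Dker m (Mf m s) (y - v • evec m s)‖₊ = (Mf m s : ℝ≥0) := by
  rw [nn_Dker_Mf hm, if_pos]
  intro l hl
  rw [sub_evec_ne (by omega)]
  exact hy l hl

lemma need1' (hm : ∀ k, 2 ≤ m k) {s : ℕ} (y : ∀ j, ZMod (m j))
    (hy : ∀ l, l < s → y l = 0) :
    (Mf m s : ℝ≥0) ≤ ∑ v ∈ Finset.Icc 1 (m s - 1), ‖Dker m (Mf m s) (y - v • evec m s)‖₊ := by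
  have h1 : (1 : ℕ) ∈ Finset.Icc 1 (m s - 1) := by
    simp only [Finset.mem_Icc]
    have := hm s
    omega
  calc (Mf m s : ℝ≥0) = ‖Dker m (Mf m s) (y - 1 • evec m s)‖₊ := (need1 hm y hy 1).symm
  _ ≤ _ := Finset.single_le_sum (f := fun v => ‖Dker m (Mf m s) (y - v • evec m s)‖₊)
      (fun v _ => zero_le) h1

lemma need2 (hm : ∀ k, 2 ≤ m k) {t q : ℕ} (y : ∀ j, ZMod (m j)) (hq : q < t)
    (hyq : y q ≠ 0) (hother : ∀ l, l < t → l ≠ q → y l = 0) :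
    (Mf m t : ℝ≥0) ≤ ∑ v ∈ Finset.Icc 1 (m q - 1), ‖Dker m (Mf m t) (y - v • evec m q)‖₊ := by
  haveI : NeZero (m q) := ⟨by have := hm q; omega⟩
  set v₀ := (y q).val with hv₀
  have hmem : v₀ ∈ Finset.Icc 1 (m q - 1) := by
    simp only [Finset.mem_Icc]
    constructor
    · have : v₀ ≠ 0 := fun h => hyq ((ZMod.val_eq_zero _).mp h)
      omega
    · have := ZMod.val_lt (y q)
      omega
  have hval : ((v₀ : ℕ) : ZMod (m q)) = y q := by
    rw [hv₀]
    simp [ZMod.natCast_val, ZMod.cast_id]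
  have hterm : ‖Dker m (Mf m t) (y - v₀ • evec m q)‖₊ = (Mf m t : ℝ≥0) := by
    rw [nn_Dker_Mf hm, if_pos]
    intro l hl
    by_cases hlq : l = q
    · subst hlq
      rw [sub_evec_eq hm, hval, sub_self]
    · rw [sub_evec_ne hlq]
      exact hother l hl hlq
  calc (Mf m t : ℝ≥0) = ‖Dker m (Mf m t) (y - v₀ • evec m q)‖₊ := hterm.symm
  _ ≤ _ := Finset.single_le_sum (f := fun v => ‖Dker m (Mf m t) (y - v • evec m q)‖₊)
      (fun v _ => zero_le) hmem

lemma nn_rr (hm : ∀ k, 2 ≤ m k) (a b : ℕ) (x y : ∀ j, ZMod (m j)) :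
    ‖rr m a b x y‖₊ = ∏ l ∈ Finset.Icc a b, ((m l : ℝ≥0) * if (x + y) l = 0 then 1 else 0) := by
  unfold rr
  rw [nnnorm_prod]
  apply Finset.prod_congr rfl
  intro l _
  simp only [psi_Mf hm]
  rw [geom_rad hm]
  split
  · simp
  · simp

lemma half_rep (hm : ∀ k, 2 ≤ m k) {A j k : ℕ} (hjA : j ≤ A) (hk : k < Mf m (A+1))
    (x : ∀ l, ZMod (m l)) (hx : ∀ l, l < j → x l = 0) :
    psi m (high m (j+1) k) x * (∑ p ∈ range (dg m j k), rad m j x ^ p)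
      = ∏ l ∈ range (A+1), (if l = j then ∑ p ∈ range (dg m l k), rad m j x ^ p
          else rad m l x ^ dg m l k) := by
  have hmem : j ∈ range (A+1) := Finset.mem_range.mpr (by omega)
  have h1 : psi m (high m (j+1) k) x
      = ∏ l ∈ range (A+1), (if l = j then 1 else rad m l x ^ dg m l k) := by
    rw [psi_eq_prod hm (lt_of_le_of_lt (high_le m (j+1) k) hk)]
    apply Finset.prod_congr rfl
    intro l _
    rw [dg_high hm]
    rcases lt_trichotomy l j with hl | hl | hl
    · rw [if_pos (by omega : l < j + 1), if_neg (by omega : ¬ l = j),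
        pow_zero, rad_eq_one hm (hx l hl), one_pow]
    · subst hl
      rw [if_pos (by omega : l < l + 1), if_pos rfl, pow_zero]
    · rw [if_neg (by omega : ¬ l < j + 1), if_neg (by omega : ¬ l = j)]
  have e1 : ∏ l ∈ range (A+1), (if l = j then (1:ℂ) else rad m l x ^ dg m l k)
      = ∏ l ∈ (range (A+1)).erase j, rad m l x ^ dg m l k := by
    rw [← Finset.mul_prod_erase _ _ hmem, if_pos rfl, one_mul]
    apply Finset.prod_congr rfl
    intro l hl
    rw [if_neg (Finset.ne_of_mem_erase hl)]
  have e2 : (∏ l ∈ range (A+1), (if l = j then (∑ p ∈ range (dg m l k), rad m j x ^ p)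
        else rad m l x ^ dg m l k))
      = (∑ p ∈ range (dg m j k), rad m j x ^ p) *
          ∏ l ∈ (range (A+1)).erase j, rad m l x ^ dg m l k := by
    rw [← Finset.mul_prod_erase _ _ hmem, if_pos rfl]
    congr 1
    apply Finset.prod_congr rfl
    intro l hl
    rw [if_neg (Finset.ne_of_mem_erase hl)]
  rw [h1, e1, e2, mul_comm]

lemma T_bound (hm : ∀ k, 2 ≤ m k) {B : ℕ} (hB : ∀ k, m k ≤ B) {A i j n : ℕ}
    (hiA : i ≤ A) (hjA : j ≤ A) (hn : n ≤ Mf m (A+1)) (x y : ∀ l, ZMod (m l))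
    (hx : ∀ l, l < j → x l = 0) (hy : ∀ l, l < i → y l = 0) :
    ‖∑ k ∈ range n, (psi m (high m (j+1) k) x * ∑ p ∈ range (dg m j k), rad m j x ^ p) *
        (psi m (high m (i+1) k) y * ∑ p ∈ range (dg m i k), rad m i y ^ p)‖₊
      ≤ (B : ℝ≥0)^13 * ∑ t' ∈ range (A+1), Qf m x y i j t' := by
  have hB1 : (1 : ℝ≥0) ≤ (B : ℝ≥0) := by
    have h0 := hm 0
    have h1 := hB 0
    exact_mod_cast (by omega : 1 ≤ B)
  have hBpow : ∀ r : ℕ, (1 : ℝ≥0) ≤ (B : ℝ≥0)^r := by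
    intro r
    calc (1:ℝ≥0) = 1^r := (one_pow r).symm
    _ ≤ (B:ℝ≥0)^r := pow_le_pow_left₀ (zero_le) hB1 r
  set g : ℕ → ℕ → ℂ := fun l s =>
    (if l = j then ∑ p ∈ range s, rad m j x ^ p else rad m l x ^ s) *
    (if l = i then ∑ p ∈ range s, rad m i y ^ p else rad m l y ^ s) with hg
  have hrep : ∀ k ∈ range n,
      (psi m (high m (j+1) k) x * ∑ p ∈ range (dg m j k), rad m j x ^ p) *
        (psi m (high m (i+1) k) y * ∑ p ∈ range (dg m i k), rad m i y ^ p)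
      = ∏ l ∈ range (A+1), g l (dg m l k) := by
    intro k hk
    have hkA : k < Mf m (A+1) := lt_of_lt_of_le (Finset.mem_range.mp hk) hn
    rw [half_rep hm hjA hkA x hx, half_rep hm hiA hkA y hy, ← Finset.prod_mul_distrib]
  set β : ℕ → ℝ≥0 := fun l => if l = j ∨ l = i then (B:ℝ≥0)^2 else 1 with hβdef
  set σ : ℕ → ℝ≥0 := fun l => if l = j ∨ l = i then (B:ℝ≥0)^3
      else ((m l : ℝ≥0) * if (x + y) l = 0 then 1 else 0) with hσdef
  have hP : ∀ (w : ∀ l, ZMod (m l)) (a s : ℕ), s < m a →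
      ‖∑ p ∈ range s, rad m a w ^ p‖₊ ≤ (B : ℝ≥0) := by
    intro w a s hs
    refine le_trans (nnnorm_sum_le _ _) ?_
    have h1 : ∀ p ∈ range s, ‖rad m a w ^ p‖₊ = 1 := by
      intro p _
      rw [nnnorm_pow, nnnorm_rad, one_pow]
    rw [Finset.sum_congr rfl h1, Finset.sum_const, Finset.card_range, nsmul_eq_mul, mul_one]
    have := hB a
    exact_mod_cast (by omega : s ≤ B)
  have hradnorm : ∀ (w : ∀ l, ZMod (m l)) (a s : ℕ), ‖rad m a w ^ s‖₊ = 1 := by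
    intro w a s
    rw [nnnorm_pow, nnnorm_rad, one_pow]
  have hβ : ∀ l s, s < m l → ‖g l s‖₊ ≤ β l := by
    intro l s hs
    rw [hg, hβdef]
    simp only [nnnorm_mul]
    by_cases h1 : l = j <;> by_cases h2 : l = i
    · rw [if_pos h1, if_pos h2, if_pos (Or.inl h1)]
      subst h1; subst h2
      calc ‖∑ p ∈ range s, rad m l x ^ p‖₊ * ‖∑ p ∈ range s, rad m l y ^ p‖₊
          ≤ (B:ℝ≥0) * (B:ℝ≥0) := mul_le_mul' (hP x l s hs) (hP y l s hs)
      _ = (B:ℝ≥0)^2 := (sq (B:ℝ≥0)).symm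
    · rw [if_pos h1, if_neg h2, if_pos (Or.inl h1), hradnorm, mul_one]
      subst h1
      calc ‖∑ p ∈ range s, rad m l x ^ p‖₊ ≤ (B:ℝ≥0) := hP x l s hs
      _ ≤ (B:ℝ≥0)^2 := le_mul_of_one_le_left' hB1 |>.trans_eq (sq (B:ℝ≥0)).symm
    · rw [if_neg h1, if_pos h2, if_pos (Or.inr h2), hradnorm, one_mul]
      subst h2
      calc ‖∑ p ∈ range s, rad m l y ^ p‖₊ ≤ (B:ℝ≥0) := hP y l s hs
      _ ≤ (B:ℝ≥0)^2 := le_mul_of_one_le_left' hB1 |>.trans_eq (sq (B:ℝ≥0)).symm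
    · rw [if_neg h1, if_neg h2, if_neg (by tauto), hradnorm, hradnorm, mul_one]
  have hσ : ∀ l, ‖∑ s ∈ range (m l), g l s‖₊ ≤ σ l := by
    intro l
    simp only [hσdef]
    by_cases hl : l = j ∨ l = i
    · rw [if_pos hl]
      refine le_trans (nnnorm_sum_le _ _) ?_
      calc ∑ s ∈ range (m l), ‖g l s‖₊ ≤ ∑ s ∈ range (m l), β l :=
            Finset.sum_le_sum fun s hs => hβ l s (Finset.mem_range.mp hs)
      _ = (m l : ℝ≥0) * β l := by rw [Finset.sum_const, Finset.card_range, nsmul_eq_mul]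
      _ ≤ (B : ℝ≥0) * (B:ℝ≥0)^2 := by
            apply mul_le_mul'
            · exact_mod_cast hB l
            · simp only [hβdef]
              rw [if_pos hl]
      _ = (B:ℝ≥0)^3 := by ring
    · rw [if_neg hl]
      push_neg at hl
      have hgl : ∀ s ∈ range (m l), g l s = rad m l (x + y) ^ s := by
        intro s _
        rw [hg]
        simp only [if_neg hl.1, if_neg hl.2]
        rw [← mul_pow, ← rad_add hm]
      rw [Finset.sum_congr rfl hgl, geom_rad hm]
      split
      · simp
      · simp
  calc ‖∑ k ∈ range n, (psi m (high m (j+1) k) x * ∑ p ∈ range (dg m j k), rad m j x ^ p) *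
        (psi m (high m (i+1) k) y * ∑ p ∈ range (dg m i k), rad m i y ^ p)‖₊
      = ‖∑ k ∈ range n, ∏ l ∈ range (A+1), g l (dg m l k)‖₊ := by
        rw [Finset.sum_congr rfl hrep]
  _ ≤ ∑ t' ∈ range (A+1), ((m t' : ℝ≥0) * β t') * (∏ l ∈ range t', σ l) *
        (∏ l ∈ Finset.Ioc t' A, β l) := core hm g β σ hβ hσ A n hn
  _ ≤ ∑ t' ∈ range (A+1), (B:ℝ≥0)^13 * Qf m x y i j t' := by
        apply Finset.sum_le_sum
        intro t' _
        have hb1 : (m t' : ℝ≥0) * β t' ≤ (B:ℝ≥0)^3 := by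
          have hm' : (m t' : ℝ≥0) ≤ (B:ℝ≥0) := by exact_mod_cast hB t'
          have hβ' : β t' ≤ (B:ℝ≥0)^2 := by
            simp only [hβdef]
            split
            · exact le_refl _
            · exact hBpow 2
          calc (m t' : ℝ≥0) * β t' ≤ (B:ℝ≥0) * (B:ℝ≥0)^2 := mul_le_mul' hm' hβ'
          _ = (B:ℝ≥0)^3 := by ring
        have hb2 : (∏ l ∈ Finset.Ioc t' A, β l) ≤ (B:ℝ≥0)^4 := by
          simp only [hβdef]
          calc (∏ l ∈ Finset.Ioc t' A, if l = j ∨ l = i then (B:ℝ≥0)^2 else 1)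
              ≤ ((B:ℝ≥0)^2)^2 := prod_ite_le_sq (hBpow 2) _ i j
          _ = (B:ℝ≥0)^4 := by ring
        have hb3 : (∏ l ∈ range t', σ l) ≤ (B:ℝ≥0)^6 * Qf m x y i j t' := by
          rw [← Finset.prod_filter_mul_prod_filter_not (range t') (fun l => l = j ∨ l = i) σ]
          apply mul_le_mul'
          · calc ∏ l ∈ (range t').filter (fun l => l = j ∨ l = i), σ l
                = ∏ l ∈ (range t').filter (fun l => l = j ∨ l = i), (B:ℝ≥0)^3 := by
                  apply Finset.prod_congr rfl
                  intro l hl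
                  simp only [hσdef]
                  rw [if_pos (Finset.mem_filter.mp hl).2]
            _ = ((B:ℝ≥0)^3)^(((range t').filter (fun l => l = j ∨ l = i)).card) :=
                  Finset.prod_const _
            _ ≤ ((B:ℝ≥0)^3)^2 := pow_le_pow_right₀ (hBpow 3) (filter_or_card _ i j)
            _ = (B:ℝ≥0)^6 := by ring
          · apply le_of_eq
            apply Finset.prod_congr rfl
            intro l hl
            simp only [hσdef]
            rw [if_neg (Finset.mem_filter.mp hl).2]
        calc ((m t' : ℝ≥0) * β t') * (∏ l ∈ range t', σ l) * (∏ l ∈ Finset.Ioc t' A, β l)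
            ≤ (B:ℝ≥0)^3 * ((B:ℝ≥0)^6 * Qf m x y i j t') * (B:ℝ≥0)^4 :=
              mul_le_mul' (mul_le_mul' hb1 hb3) hb2
        _ = (B:ℝ≥0)^13 * Qf m x y i j t' := by ring
  _ = (B:ℝ≥0)^13 * ∑ t' ∈ range (A+1), Qf m x y i j t' := (Finset.mul_sum _ _ _).symm

lemma nn_Dker_le (hm : ∀ k, 2 ≤ m k) (i : ℕ) (y : ∀ l, ZMod (m l)) :
    ‖Dker m (Mf m i) y‖₊ ≤ (Mf m i : ℝ≥0) := by
  rw [nn_Dker_Mf hm]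
  split
  · exact le_refl _
  · exact zero_le

lemma prod_m_subset (hm : ∀ k, 2 ≤ m k) {S : Finset ℕ} {j : ℕ} (h : S ⊆ range j) :
    (∏ l ∈ S, (m l : ℝ≥0)) ≤ (Mf m j : ℝ≥0) := by
  rw [Mf_cast_prod]
  apply Finset.prod_le_prod_of_subset_of_one_le' h
  intro l _ _
  exact_mod_cast (by have := hm l; omega : 1 ≤ m l)

lemma Bcore (hm : ∀ k, 2 ≤ m k) {j t' : ℕ} (hjt : j < t') (x y : ∀ l, ZMod (m l))
    (hx : ∀ l, l < j → x l = 0) :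
    ∑ i ∈ range (j+1), ‖Dker m (Mf m i) y‖₊ * Qf m x y i j t'
    ≤ 2 * ∑ q ∈ range (j+1),
        (∏ l ∈ Finset.Ioo j t', ((m l : ℝ≥0) * if (x + y) l = 0 then 1 else 0)) *
          (Mf m q : ℝ≥0) *
          ∑ v ∈ Finset.Icc 1 (m q - 1), ‖Dker m (Mf m j) (y - v • evec m q)‖₊ := by
  set R := ∏ l ∈ Finset.Ioo j t', ((m l : ℝ≥0) * if (x + y) l = 0 then 1 else 0) with hR
  set F : ℕ → ℝ≥0 := fun i => (∏ l ∈ (range j).filter (fun l => ¬ l = i), (m l : ℝ≥0)) *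
      (if (∀ l, l < j → ¬ l = i → y l = 0) then 1 else 0) with hFdef
  have hQsplit : ∀ i ∈ range (j+1), Qf m x y i j t' = F i * R := by
    intro i hi
    have hij : i ≤ j := by have := Finset.mem_range.mp hi; omega
    unfold Qf
    have hdisj : Disjoint ((range j).filter (fun l => ¬ l = i)) (Finset.Ioo j t') := by
      rw [Finset.disjoint_left]
      intro l h1 h2
      have := Finset.mem_range.mp (Finset.mem_filter.mp h1).1
      have := (Finset.mem_Ioo.mp h2).1
      omega
    have hset : (range t').filter (fun l => ¬(l = j ∨ l = i))
        = ((range j).filter (fun l => ¬ l = i)) ∪ Finset.Ioo j t' := by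
      ext l
      simp only [Finset.mem_filter, Finset.mem_range, Finset.mem_union, Finset.mem_Ioo, not_or]
      omega
    rw [hset, Finset.prod_union hdisj]
    congr 1
    have hcond : ∀ l ∈ (range j).filter (fun l => ¬ l = i),
        ((m l : ℝ≥0) * if (x + y) l = 0 then 1 else 0)
          = ((m l : ℝ≥0) * if y l = 0 then 1 else 0) := by
      intro l hl
      have hlj : l < j := Finset.mem_range.mp (Finset.mem_filter.mp hl).1
      have hxy : (x + y) l = y l := by
        show x l + y l = y l
        rw [hx l hlj, zero_add]
      rw [hxy]
    rw [Finset.prod_congr rfl hcond, Finset.prod_mul_distrib, prod_ind, hFdef]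
    congr 1
    apply if_congr _ rfl rfl
    constructor
    · intro hall l hlj hli
      exact hall l (Finset.mem_filter.mpr ⟨Finset.mem_range.mpr hlj, hli⟩)
    · intro hall l hl
      exact hall l (Finset.mem_range.mp (Finset.mem_filter.mp hl).1) (Finset.mem_filter.mp hl).2
  have hFle : ∀ i, F i ≤ (Mf m j : ℝ≥0) := by
    intro i
    simp only [hFdef]
    calc (∏ l ∈ (range j).filter (fun l => ¬ l = i), (m l : ℝ≥0)) *
          (if (∀ l, l < j → ¬ l = i → y l = 0) then (1:ℝ≥0) else 0)
        ≤ (∏ l ∈ (range j).filter (fun l => ¬ l = i), (m l : ℝ≥0)) * 1 := by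
          apply mul_le_mul_right
          split
          · exact le_refl _
          · exact zero_le
    _ = ∏ l ∈ (range j).filter (fun l => ¬ l = i), (m l : ℝ≥0) := mul_one _
    _ ≤ (Mf m j : ℝ≥0) := prod_m_subset hm (Finset.filter_subset _ _)
  have main : ∑ i ∈ range (j+1), ‖Dker m (Mf m i) y‖₊ * F i
      ≤ 2 * ∑ q ∈ range (j+1), (Mf m q : ℝ≥0) *
          ∑ v ∈ Finset.Icc 1 (m q - 1), ‖Dker m (Mf m j) (y - v • evec m q)‖₊ := by
    by_cases hy : ∀ l, l < j → y l = 0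
    · have hterm : ∀ i ∈ range (j+1), ‖Dker m (Mf m i) y‖₊ * F i
          ≤ (Mf m i : ℝ≥0) * (Mf m j : ℝ≥0) :=
        fun i _ => mul_le_mul' (nn_Dker_le hm i y) (hFle i)
      calc ∑ i ∈ range (j+1), ‖Dker m (Mf m i) y‖₊ * F i
          ≤ ∑ i ∈ range (j+1), (Mf m i : ℝ≥0) * (Mf m j : ℝ≥0) := Finset.sum_le_sum hterm
      _ = (∑ i ∈ range (j+1), (Mf m i : ℝ≥0)) * (Mf m j : ℝ≥0) := (Finset.sum_mul _ _ _).symm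
      _ ≤ (2 * (Mf m j : ℝ≥0)) * (Mf m j : ℝ≥0) := mul_le_mul_left (sum_Mf_le' hm j) _
      _ = 2 * ((Mf m j : ℝ≥0) * (Mf m j : ℝ≥0)) := by ring
      _ ≤ 2 * ((Mf m j : ℝ≥0) *
            ∑ v ∈ Finset.Icc 1 (m j - 1), ‖Dker m (Mf m j) (y - v • evec m j)‖₊) :=
          mul_le_mul_right (mul_le_mul_right (need1' hm y hy) _) 2
      _ ≤ 2 * ∑ q ∈ range (j+1), (Mf m q : ℝ≥0) *
            ∑ v ∈ Finset.Icc 1 (m q - 1), ‖Dker m (Mf m j) (y - v • evec m q)‖₊ := by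
          apply mul_le_mul_right
          exact Finset.single_le_sum (f := fun q => (Mf m q : ℝ≥0) *
            ∑ v ∈ Finset.Icc 1 (m q - 1), ‖Dker m (Mf m j) (y - v • evec m q)‖₊)
            (fun q _ => zero_le) (Finset.mem_range.mpr (by omega))
    · push_neg at hy
      obtain ⟨l₀, hl₀, hyl₀⟩ := hy
      have hzero : ∀ i ∈ range (j+1), i ≠ l₀ → ‖Dker m (Mf m i) y‖₊ * F i = 0 := by
        intro i _ hne
        have hF0 : F i = 0 := by
          simp only [hFdef]
          rw [if_neg (fun hall => hyl₀ (hall l₀ hl₀ (fun he => hne he.symm))), mul_zero]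
        rw [hF0, mul_zero]
      rw [Finset.sum_eq_single_of_mem l₀ (Finset.mem_range.mpr (by omega)) hzero]
      by_cases hrest : ∀ l, l < j → ¬ l = l₀ → y l = 0
      · calc ‖Dker m (Mf m l₀) y‖₊ * F l₀ ≤ (Mf m l₀ : ℝ≥0) * (Mf m j : ℝ≥0) :=
              mul_le_mul' (nn_Dker_le hm l₀ y) (hFle l₀)
        _ ≤ (Mf m l₀ : ℝ≥0) *
              ∑ v ∈ Finset.Icc 1 (m l₀ - 1), ‖Dker m (Mf m j) (y - v • evec m l₀)‖₊ :=
            mul_le_mul_right (need2 hm y hl₀ hyl₀ (fun l h1 h2 => hrest l h1 h2)) _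
        _ ≤ ∑ q ∈ range (j+1), (Mf m q : ℝ≥0) *
              ∑ v ∈ Finset.Icc 1 (m q - 1), ‖Dker m (Mf m j) (y - v • evec m q)‖₊ :=
            Finset.single_le_sum (f := fun q => (Mf m q : ℝ≥0) *
              ∑ v ∈ Finset.Icc 1 (m q - 1), ‖Dker m (Mf m j) (y - v • evec m q)‖₊)
              (fun q _ => zero_le) (Finset.mem_range.mpr (by omega))
        _ ≤ 2 * ∑ q ∈ range (j+1), (Mf m q : ℝ≥0) *
              ∑ v ∈ Finset.Icc 1 (m q - 1), ‖Dker m (Mf m j) (y - v • evec m q)‖₊ :=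
            le_mul_of_one_le_left (zero_le) one_le_two
      · have hF0 : F l₀ = 0 := by
          simp only [hFdef]
          rw [if_neg hrest, mul_zero]
        rw [hF0, mul_zero]
        exact zero_le
  calc ∑ i ∈ range (j+1), ‖Dker m (Mf m i) y‖₊ * Qf m x y i j t'
      = ∑ i ∈ range (j+1), (‖Dker m (Mf m i) y‖₊ * F i) * R := by
        apply Finset.sum_congr rfl
        intro i hi
        rw [hQsplit i hi, ← mul_assoc]
  _ = (∑ i ∈ range (j+1), ‖Dker m (Mf m i) y‖₊ * F i) * R := (Finset.sum_mul _ _ _).symm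
  _ ≤ (2 * ∑ q ∈ range (j+1), (Mf m q : ℝ≥0) *
        ∑ v ∈ Finset.Icc 1 (m q - 1), ‖Dker m (Mf m j) (y - v • evec m q)‖₊) * R :=
      mul_le_mul_left main R
  _ = 2 * ∑ q ∈ range (j+1), R * (Mf m q : ℝ≥0) *
        ∑ v ∈ Finset.Icc 1 (m q - 1), ‖Dker m (Mf m j) (y - v • evec m q)‖₊ := by
      rw [Finset.mul_sum, Finset.mul_sum, Finset.sum_mul]
      apply Finset.sum_congr rfl
      intro q _
      ring

lemma Acore (hm : ∀ k, 2 ≤ m k) {j : ℕ} (x y : ∀ l, ZMod (m l))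
    (hx : ∀ l, l < j → x l = 0) :
    ∑ i ∈ range (j+1), ‖Dker m (Mf m i) y‖₊ * (∑ t' ∈ range (j+1), Qf m x y i j t')
    ≤ 4 * ∑ s ∈ range (j+1), (Mf m s : ℝ≥0) *
        ∑ i' ∈ Finset.Icc s j, ∑ v ∈ Finset.Icc 1 (m s - 1),
          ‖Dker m (Mf m i') (y - v • evec m s)‖₊ := by
  set Y := ∑ s ∈ range (j+1), (Mf m s : ℝ≥0) *
      ∑ i' ∈ Finset.Icc s j, ∑ v ∈ Finset.Icc 1 (m s - 1),
        ‖Dker m (Mf m i') (y - v • evec m s)‖₊ with hY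
  set G : ℕ → ℕ → ℝ≥0 := fun i t' =>
      (∏ l ∈ (range t').filter (fun l => ¬ l = i), (m l : ℝ≥0)) *
        (if ∀ l, l < t' → ¬ l = i → y l = 0 then 1 else 0) with hGdef
  have hQ : ∀ i, ∀ t' ∈ range (j+1), Qf m x y i j t' = G i t' := by
    intro i t' ht'
    have ht'j : t' ≤ j := by have := Finset.mem_range.mp ht'; omega
    unfold Qf
    have hset : (range t').filter (fun l => ¬(l = j ∨ l = i))
        = (range t').filter (fun l => ¬ l = i) := by
      ext l
      simp only [Finset.mem_filter, Finset.mem_range, not_or]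
      omega
    rw [hset]
    have hcond : ∀ l ∈ (range t').filter (fun l => ¬ l = i),
        ((m l : ℝ≥0) * if (x + y) l = 0 then 1 else 0)
          = ((m l : ℝ≥0) * if y l = 0 then 1 else 0) := by
      intro l hl
      have hlj : l < j := by
        have := Finset.mem_range.mp (Finset.mem_filter.mp hl).1
        omega
      have hxy : (x + y) l = y l := by
        show x l + y l = y l
        rw [hx l hlj, zero_add]
      rw [hxy]
    rw [Finset.prod_congr rfl hcond, Finset.prod_mul_distrib, prod_ind, hGdef]
    congr 1
    apply if_congr _ rfl rfl
    constructor
    · intro hall l hlt hli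
      exact hall l (Finset.mem_filter.mpr ⟨Finset.mem_range.mpr hlt, hli⟩)
    · intro hall l hl
      exact hall l (Finset.mem_range.mp (Finset.mem_filter.mp hl).1) (Finset.mem_filter.mp hl).2
  have hGle : ∀ i t', G i t' ≤ (Mf m t' : ℝ≥0) := by
    intro i t'
    simp only [hGdef]
    calc (∏ l ∈ (range t').filter (fun l => ¬ l = i), (m l : ℝ≥0)) *
          (if ∀ l, l < t' → ¬ l = i → y l = 0 then (1:ℝ≥0) else 0)
        ≤ (∏ l ∈ (range t').filter (fun l => ¬ l = i), (m l : ℝ≥0)) * 1 := by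
          apply mul_le_mul_right
          split
          · exact le_refl _
          · exact zero_le
    _ = ∏ l ∈ (range t').filter (fun l => ¬ l = i), (m l : ℝ≥0) := mul_one _
    _ ≤ (Mf m t' : ℝ≥0) := prod_m_subset hm (Finset.filter_subset _ _)
  -- part S1 : small t'
  have hS1 : ∀ i ∈ range (j+1),
      ‖Dker m (Mf m i) y‖₊ * (∑ t' ∈ range (i+1), G i t')
      ≤ 2 * ((Mf m i : ℝ≥0) * ∑ i' ∈ Finset.Icc i j, ∑ v ∈ Finset.Icc 1 (m i - 1),
          ‖Dker m (Mf m i') (y - v • evec m i)‖₊) := by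
    intro i hi
    have hij : i ≤ j := by have := Finset.mem_range.mp hi; omega
    by_cases hyi : ∀ l, l < i → y l = 0
    · rw [nn_Dker_Mf hm, if_pos hyi]
      calc (Mf m i : ℝ≥0) * (∑ t' ∈ range (i+1), G i t')
          ≤ (Mf m i : ℝ≥0) * (∑ t' ∈ range (i+1), (Mf m t' : ℝ≥0)) :=
            mul_le_mul_right (Finset.sum_le_sum fun t' _ => hGle i t') _
      _ ≤ (Mf m i : ℝ≥0) * (2 * (Mf m i : ℝ≥0)) := mul_le_mul_right (sum_Mf_le' hm i) _
      _ = 2 * ((Mf m i : ℝ≥0) * (Mf m i : ℝ≥0)) := by ring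
      _ ≤ 2 * ((Mf m i : ℝ≥0) * ∑ v ∈ Finset.Icc 1 (m i - 1),
            ‖Dker m (Mf m i) (y - v • evec m i)‖₊) :=
          mul_le_mul_right (mul_le_mul_right (need1' hm y hyi) _) 2
      _ ≤ 2 * ((Mf m i : ℝ≥0) * ∑ i' ∈ Finset.Icc i j, ∑ v ∈ Finset.Icc 1 (m i - 1),
            ‖Dker m (Mf m i') (y - v • evec m i)‖₊) := by
          apply mul_le_mul_right
          apply mul_le_mul_right
          exact Finset.single_le_sum (f := fun i' => ∑ v ∈ Finset.Icc 1 (m i - 1),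
            ‖Dker m (Mf m i') (y - v • evec m i)‖₊) (fun i' _ => zero_le)
            (Finset.mem_Icc.mpr ⟨le_refl i, hij⟩)
    · rw [nn_Dker_Mf hm, if_neg hyi, zero_mul]
      exact zero_le
  -- per-term bound for large t'
  set α : ℕ → ℕ → ℝ≥0 := fun i t' => (Mf m i : ℝ≥0) *
      ∑ v ∈ Finset.Icc 1 (m i - 1), ‖Dker m (Mf m t') (y - v • evec m i)‖₊ with hαdef
  set W : ℕ → ℕ → ℝ≥0 := fun i t' =>
      ((Mf m i : ℝ≥0)^2 * ∏ l ∈ Finset.Ioo i t', (m l : ℝ≥0)) *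
        (if ∀ l, l < t' → y l = 0 then 1 else 0) with hWdef
  have hsplit2 : ∀ i ∈ range (j+1), ∀ t' ∈ Finset.Ioc i j,
      ‖Dker m (Mf m i) y‖₊ * G i t' ≤ α i t' + W i t' := by
    intro i _ t' ht'
    have hit : i < t' := (Finset.mem_Ioc.mp ht').1
    by_cases hyi0 : y i = 0
    · refine le_trans ?_ (self_le_add_left _ _)
      -- term ≤ W
      by_cases hall : ∀ l, l < t' → y l = 0
      · simp only [hWdef]
        rw [if_pos hall, mul_one]
        have hprodsplit : (∏ l ∈ (range t').filter (fun l => ¬ l = i), (m l : ℝ≥0))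
            = (Mf m i : ℝ≥0) * ∏ l ∈ Finset.Ioo i t', (m l : ℝ≥0) := by
          have hset2 : (range t').filter (fun l => ¬ l = i)
              = range i ∪ Finset.Ioo i t' := by
            ext l
            simp only [Finset.mem_filter, Finset.mem_range, Finset.mem_union, Finset.mem_Ioo]
            omega
          rw [hset2, Finset.prod_union (by
            rw [Finset.disjoint_left]
            intro l h1 h2
            have := Finset.mem_range.mp h1
            have := (Finset.mem_Ioo.mp h2).1
            omega), Mf_cast_prod]
        calc ‖Dker m (Mf m i) y‖₊ * G i t'
            ≤ (Mf m i : ℝ≥0) * G i t' := mul_le_mul_left (nn_Dker_le hm i y) _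
        _ ≤ (Mf m i : ℝ≥0) * ((Mf m i : ℝ≥0) * ∏ l ∈ Finset.Ioo i t', (m l : ℝ≥0)) := by
            apply mul_le_mul_right
            calc G i t' ≤ (∏ l ∈ (range t').filter (fun l => ¬ l = i), (m l : ℝ≥0)) * 1 := by
                  simp only [hGdef]
                  apply mul_le_mul_right
                  split
                  · exact le_refl _
                  · exact zero_le
            _ = ∏ l ∈ (range t').filter (fun l => ¬ l = i), (m l : ℝ≥0) := mul_one _
            _ = (Mf m i : ℝ≥0) * ∏ l ∈ Finset.Ioo i t', (m l : ℝ≥0) := hprodsplit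
        _ = (Mf m i : ℝ≥0)^2 * ∏ l ∈ Finset.Ioo i t', (m l : ℝ≥0) := by ring
      · -- term = 0
        push_neg at hall
        obtain ⟨l₀, hl₀, hyl₀⟩ := hall
        rcases lt_trichotomy l₀ i with hli | hli | hli
        · have : ‖Dker m (Mf m i) y‖₊ = 0 := by
            rw [nn_Dker_Mf hm, if_neg (fun hall2 => hyl₀ (hall2 l₀ hli))]
          rw [this, zero_mul]
          exact zero_le
        · exfalso
          subst hli
          exact hyl₀ hyi0
        · have : G i t' = 0 := by
            simp only [hGdef]
            rw [if_neg (fun hall2 => hyl₀ (hall2 l₀ hl₀ (by omega))), mul_zero]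
          rw [this, mul_zero]
          exact zero_le
    · refine le_trans ?_ le_self_add
      -- term ≤ α
      by_cases hrest : ∀ l, l < t' → ¬ l = i → y l = 0
      · simp only [hαdef]
        apply mul_le_mul' (nn_Dker_le hm i y)
        calc G i t' ≤ (Mf m t' : ℝ≥0) := hGle i t'
        _ ≤ ∑ v ∈ Finset.Icc 1 (m i - 1), ‖Dker m (Mf m t') (y - v • evec m i)‖₊ :=
            need2 hm y hit hyi0 (fun l h1 h2 => hrest l h1 h2)
      · have : G i t' = 0 := by
          simp only [hGdef]
          rw [if_neg hrest, mul_zero]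
        rw [this, mul_zero]
        exact zero_le
  -- sum of α part
  have hαsum : ∑ i ∈ range (j+1), ∑ t' ∈ Finset.Ioc i j, α i t' ≤ Y := by
    rw [hY]
    apply Finset.sum_le_sum
    intro i _
    calc ∑ t' ∈ Finset.Ioc i j, α i t'
        = (Mf m i : ℝ≥0) * ∑ t' ∈ Finset.Ioc i j, ∑ v ∈ Finset.Icc 1 (m i - 1),
            ‖Dker m (Mf m t') (y - v • evec m i)‖₊ := by
          simp only [hαdef]
          rw [Finset.mul_sum]
    _ ≤ (Mf m i : ℝ≥0) * ∑ i' ∈ Finset.Icc i j, ∑ v ∈ Finset.Icc 1 (m i - 1),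
          ‖Dker m (Mf m i') (y - v • evec m i)‖₊ := by
        apply mul_le_mul_right
        apply Finset.sum_le_sum_of_subset
        exact Finset.Ioc_subset_Icc_self
  -- sum of W part
  have hWsum : ∑ i ∈ range (j+1), ∑ t' ∈ Finset.Ioc i j, W i t' ≤ Y := by
    rw [tri W j]
    rw [hY]
    apply Finset.sum_le_sum
    intro t' ht'
    have ht'j : t' ≤ j := by have := Finset.mem_range.mp ht'; omega
    have hfact : ∑ i ∈ range t', W i t'
        = (∑ i ∈ range t', (Mf m i : ℝ≥0)^2 * ∏ l ∈ Finset.Ioo i t', (m l : ℝ≥0)) *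
            (if ∀ l, l < t' → y l = 0 then 1 else 0) := by
      simp only [hWdef]
      rw [Finset.sum_mul]
    rw [hfact]
    by_cases hall : ∀ l, l < t' → y l = 0
    · rw [if_pos hall, mul_one]
      calc ∑ i ∈ range t', (Mf m i : ℝ≥0)^2 * ∏ l ∈ Finset.Ioo i t', (m l : ℝ≥0)
          ≤ (Mf m t' : ℝ≥0)^2 := key_sum hm t'
      _ = (Mf m t' : ℝ≥0) * (Mf m t' : ℝ≥0) := sq (Mf m t' : ℝ≥0)
      _ ≤ (Mf m t' : ℝ≥0) * ∑ v ∈ Finset.Icc 1 (m t' - 1),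
            ‖Dker m (Mf m t') (y - v • evec m t')‖₊ :=
          mul_le_mul_right (need1' hm y hall) _
      _ ≤ (Mf m t' : ℝ≥0) * ∑ i' ∈ Finset.Icc t' j, ∑ v ∈ Finset.Icc 1 (m t' - 1),
            ‖Dker m (Mf m i') (y - v • evec m t')‖₊ := by
          apply mul_le_mul_right
          exact Finset.single_le_sum (f := fun i' => ∑ v ∈ Finset.Icc 1 (m t' - 1),
            ‖Dker m (Mf m i') (y - v • evec m t')‖₊) (fun i' _ => zero_le)
            (Finset.mem_Icc.mpr ⟨le_refl t', ht'j⟩)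
    · rw [if_neg hall, mul_zero]
      exact zero_le
  -- assemble
  calc ∑ i ∈ range (j+1), ‖Dker m (Mf m i) y‖₊ * (∑ t' ∈ range (j+1), Qf m x y i j t')
      = ∑ i ∈ range (j+1), (‖Dker m (Mf m i) y‖₊ * (∑ t' ∈ range (i+1), G i t')
          + ‖Dker m (Mf m i) y‖₊ * (∑ t' ∈ Finset.Ioc i j, G i t')) := by
        apply Finset.sum_congr rfl
        intro i hi
        have hij : i ≤ j := by have := Finset.mem_range.mp hi; omega
        rw [Finset.sum_congr rfl (hQ i), sum_range_split _ hij, mul_add]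
  _ = (∑ i ∈ range (j+1), ‖Dker m (Mf m i) y‖₊ * (∑ t' ∈ range (i+1), G i t'))
      + ∑ i ∈ range (j+1), ‖Dker m (Mf m i) y‖₊ * (∑ t' ∈ Finset.Ioc i j, G i t') :=
      Finset.sum_add_distrib
  _ ≤ (∑ i ∈ range (j+1), 2 * ((Mf m i : ℝ≥0) * ∑ i' ∈ Finset.Icc i j,
        ∑ v ∈ Finset.Icc 1 (m i - 1), ‖Dker m (Mf m i') (y - v • evec m i)‖₊))
      + ∑ i ∈ range (j+1), ∑ t' ∈ Finset.Ioc i j, (α i t' + W i t') := by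
      apply add_le_add
      · exact Finset.sum_le_sum hS1
      · apply Finset.sum_le_sum
        intro i hi
        rw [Finset.mul_sum]
        exact Finset.sum_le_sum (hsplit2 i hi)
  _ ≤ 2 * Y + (Y + Y) := by
      apply add_le_add
      · rw [hY, Finset.mul_sum]
      · calc ∑ i ∈ range (j+1), ∑ t' ∈ Finset.Ioc i j, (α i t' + W i t')
            = (∑ i ∈ range (j+1), ∑ t' ∈ Finset.Ioc i j, α i t')
              + ∑ i ∈ range (j+1), ∑ t' ∈ Finset.Ioc i j, W i t' := by
              rw [← Finset.sum_add_distrib]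
              apply Finset.sum_congr rfl
              intro i _
              rw [← Finset.sum_add_distrib]
        _ ≤ Y + Y := add_le_add hαsum hWsum
  _ = 4 * Y := by ring

lemma tri2 (F : ℕ → ℕ → ℝ≥0) (J : ℕ) :
    ∑ j ∈ range J, ∑ q ∈ range (j+1), F q j
      = ∑ q ∈ range J, ∑ k ∈ Finset.Icc q (J-1), F q k := by
  have h1 : ∀ j ∈ range J, range (j+1) = (range J).filter (fun q => q ≤ j) := by
    intro j hj
    have := Finset.mem_range.mp hj
    ext q
    simp only [Finset.mem_range, Finset.mem_filter]
    omega
  have h2 : ∀ q ∈ range J, (range J).filter (fun j => q ≤ j) = Finset.Icc q (J-1) := by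
    intro q hq
    have := Finset.mem_range.mp hq
    ext j
    simp only [Finset.mem_range, Finset.mem_filter, Finset.mem_Icc]
    omega
  calc ∑ j ∈ range J, ∑ q ∈ range (j+1), F q j
      = ∑ j ∈ range J, ∑ q ∈ range J, if q ≤ j then F q j else 0 := by
        apply Finset.sum_congr rfl
        intro j hj
        rw [h1 j hj, Finset.sum_filter]
  _ = ∑ q ∈ range J, ∑ j ∈ range J, if q ≤ j then F q j else 0 := Finset.sum_comm
  _ = ∑ q ∈ range J, ∑ k ∈ Finset.Icc q (J-1), F q k := by
        apply Finset.sum_congr rfl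
        intro q hq
        rw [← h2 q hq, Finset.sum_filter]

lemma master (hm : ∀ k, 2 ≤ m k) (A : ℕ) (x y : ∀ l, ZMod (m l)) :
    ∑ j ∈ range (A+1), ∑ i ∈ range (j+1),
        (‖Dker m (Mf m j) x‖₊ * ‖Dker m (Mf m i) y‖₊) * (∑ t' ∈ range (A+1), Qf m x y i j t')
    ≤ 4 * ((∑ J ∈ range (A+1), ∑ q ∈ range J, ∑ k ∈ Finset.Icc q (J-1),
            ‖rr m (k+1) (J-1) x y‖₊ * (Mf m q : ℝ≥0) * ‖Dker m (Mf m k) x‖₊ *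
              ∑ v ∈ Finset.Icc 1 (m q - 1), ‖Dker m (Mf m k) (y - v • evec m q)‖₊)
        + ∑ j ∈ range (A+1), ‖Dker m (Mf m j) x‖₊ *
            ∑ s ∈ range (j+1), (Mf m s : ℝ≥0) *
              ∑ i ∈ Finset.Icc s j, ∑ v ∈ Finset.Icc 1 (m s - 1),
                ‖Dker m (Mf m i) (y - v • evec m s)‖₊) := by
  set T1 := ∑ J ∈ range (A+1), ∑ q ∈ range J, ∑ k ∈ Finset.Icc q (J-1),
      ‖rr m (k+1) (J-1) x y‖₊ * (Mf m q : ℝ≥0) * ‖Dker m (Mf m k) x‖₊ *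
        ∑ v ∈ Finset.Icc 1 (m q - 1), ‖Dker m (Mf m k) (y - v • evec m q)‖₊ with hT1
  set U : ℕ → ℝ≥0 := fun j => ∑ J ∈ Finset.Ioc j A, ∑ q ∈ range (j+1),
      ‖rr m (j+1) (J-1) x y‖₊ * (Mf m q : ℝ≥0) * ‖Dker m (Mf m j) x‖₊ *
        ∑ v ∈ Finset.Icc 1 (m q - 1), ‖Dker m (Mf m j) (y - v • evec m q)‖₊ with hU
  set T3b : ℕ → ℝ≥0 := fun j => ‖Dker m (Mf m j) x‖₊ *
      ∑ s ∈ range (j+1), (Mf m s : ℝ≥0) *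
        ∑ i ∈ Finset.Icc s j, ∑ v ∈ Finset.Icc 1 (m s - 1),
          ‖Dker m (Mf m i) (y - v • evec m s)‖₊ with hT3b
  have claim1 : ∀ j ∈ range (A+1),
      ∑ i ∈ range (j+1), (‖Dker m (Mf m j) x‖₊ * ‖Dker m (Mf m i) y‖₊) *
          (∑ t' ∈ range (A+1), Qf m x y i j t')
        ≤ 4 * T3b j + 2 * U j := by
    intro j hj
    have hjA : j ≤ A := by have := Finset.mem_range.mp hj; omega
    by_cases hx : ∀ l, l < j → x l = 0
    · have hDx : ‖Dker m (Mf m j) x‖₊ = (Mf m j : ℝ≥0) := by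
        rw [nn_Dker_Mf hm, if_pos hx]
      have step1 : ∑ i ∈ range (j+1), (‖Dker m (Mf m j) x‖₊ * ‖Dker m (Mf m i) y‖₊) *
            (∑ t' ∈ range (A+1), Qf m x y i j t')
          = (Mf m j : ℝ≥0) * (∑ i ∈ range (j+1), ‖Dker m (Mf m i) y‖₊ *
              (∑ t' ∈ range (j+1), Qf m x y i j t'))
            + (Mf m j : ℝ≥0) * (∑ i ∈ range (j+1), ‖Dker m (Mf m i) y‖₊ *
              (∑ t' ∈ Finset.Ioc j A, Qf m x y i j t')) := by
        rw [Finset.mul_sum, Finset.mul_sum, ← Finset.sum_add_distrib]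
        apply Finset.sum_congr rfl
        intro i _
        rw [hDx, sum_range_split (fun t' => Qf m x y i j t') hjA]
        ring
      rw [step1]
      have bndA : (Mf m j : ℝ≥0) * (∑ i ∈ range (j+1), ‖Dker m (Mf m i) y‖₊ *
            (∑ t' ∈ range (j+1), Qf m x y i j t')) ≤ 4 * T3b j := by
        calc (Mf m j : ℝ≥0) * (∑ i ∈ range (j+1), ‖Dker m (Mf m i) y‖₊ *
              (∑ t' ∈ range (j+1), Qf m x y i j t'))
            ≤ (Mf m j : ℝ≥0) * (4 * ∑ s ∈ range (j+1), (Mf m s : ℝ≥0) *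
                ∑ i' ∈ Finset.Icc s j, ∑ v ∈ Finset.Icc 1 (m s - 1),
                  ‖Dker m (Mf m i') (y - v • evec m s)‖₊) :=
              mul_le_mul_right (Acore hm x y hx) _
        _ = 4 * T3b j := by rw [hT3b]; simp only [hDx]; ring
      have bndB : (Mf m j : ℝ≥0) * (∑ i ∈ range (j+1), ‖Dker m (Mf m i) y‖₊ *
            (∑ t' ∈ Finset.Ioc j A, Qf m x y i j t')) ≤ 2 * U j := by
        have swap : ∑ i ∈ range (j+1), ‖Dker m (Mf m i) y‖₊ *
              (∑ t' ∈ Finset.Ioc j A, Qf m x y i j t')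
            = ∑ t' ∈ Finset.Ioc j A, ∑ i ∈ range (j+1),
                ‖Dker m (Mf m i) y‖₊ * Qf m x y i j t' := by
          rw [Finset.sum_comm]
          apply Finset.sum_congr rfl
          intro i _
          rw [Finset.mul_sum]
        rw [swap]
        have bnd2 : ∀ t' ∈ Finset.Ioc j A,
            ∑ i ∈ range (j+1), ‖Dker m (Mf m i) y‖₊ * Qf m x y i j t'
            ≤ 2 * ∑ q ∈ range (j+1),
                (∏ l ∈ Finset.Ioo j t', ((m l : ℝ≥0) * if (x + y) l = 0 then 1 else 0)) *
                  (Mf m q : ℝ≥0) *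
                  ∑ v ∈ Finset.Icc 1 (m q - 1), ‖Dker m (Mf m j) (y - v • evec m q)‖₊ := by
          intro t' ht'
          exact Bcore hm (Finset.mem_Ioc.mp ht').1 x y hx
        have hRrr : ∀ t' ∈ Finset.Ioc j A,
            (∏ l ∈ Finset.Ioo j t', ((m l : ℝ≥0) * if (x + y) l = 0 then 1 else 0))
              = ‖rr m (j+1) (t'-1) x y‖₊ := by
          intro t' ht'
          have hjt : j < t' := (Finset.mem_Ioc.mp ht').1
          rw [nn_rr hm]
          apply Finset.prod_congr _ (fun _ _ => rfl)
          ext l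
          simp only [Finset.mem_Ioo, Finset.mem_Icc]
          omega
        calc (Mf m j : ℝ≥0) * ∑ t' ∈ Finset.Ioc j A, ∑ i ∈ range (j+1),
              ‖Dker m (Mf m i) y‖₊ * Qf m x y i j t'
            ≤ (Mf m j : ℝ≥0) * ∑ t' ∈ Finset.Ioc j A, 2 * ∑ q ∈ range (j+1),
                (∏ l ∈ Finset.Ioo j t', ((m l : ℝ≥0) * if (x + y) l = 0 then 1 else 0)) *
                  (Mf m q : ℝ≥0) *
                  ∑ v ∈ Finset.Icc 1 (m q - 1), ‖Dker m (Mf m j) (y - v • evec m q)‖₊ :=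
              mul_le_mul_right (Finset.sum_le_sum bnd2) _
        _ = 2 * U j := by
            rw [hU]
            simp only []
            rw [Finset.mul_sum, Finset.mul_sum]
            apply Finset.sum_congr rfl
            intro t' ht'
            rw [hRrr t' ht']
            rw [Finset.mul_sum, Finset.mul_sum, Finset.mul_sum]
            apply Finset.sum_congr rfl
            intro q _
            rw [hDx]
            ring
      exact add_le_add bndA bndB
    · have hDx0 : ‖Dker m (Mf m j) x‖₊ = 0 := by
        rw [nn_Dker_Mf hm, if_neg hx]
      have : ∑ i ∈ range (j+1), (‖Dker m (Mf m j) x‖₊ * ‖Dker m (Mf m i) y‖₊) *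
            (∑ t' ∈ range (A+1), Qf m x y i j t') = 0 := by
        apply Finset.sum_eq_zero
        intro i _
        rw [hDx0, zero_mul, zero_mul]
      rw [this]
      exact zero_le
  have hUsum : ∑ j ∈ range (A+1), U j = T1 := by
    rw [hU, hT1]
    simp only []
    rw [tri (fun j J => ∑ q ∈ range (j+1),
      ‖rr m (j+1) (J-1) x y‖₊ * (Mf m q : ℝ≥0) * ‖Dker m (Mf m j) x‖₊ *
        ∑ v ∈ Finset.Icc 1 (m q - 1), ‖Dker m (Mf m j) (y - v • evec m q)‖₊) A]
    apply Finset.sum_congr rfl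
    intro J _
    exact tri2 (fun q k => ‖rr m (k+1) (J-1) x y‖₊ * (Mf m q : ℝ≥0) * ‖Dker m (Mf m k) x‖₊ *
      ∑ v ∈ Finset.Icc 1 (m q - 1), ‖Dker m (Mf m k) (y - v • evec m q)‖₊) J
  calc ∑ j ∈ range (A+1), ∑ i ∈ range (j+1),
        (‖Dker m (Mf m j) x‖₊ * ‖Dker m (Mf m i) y‖₊) * (∑ t' ∈ range (A+1), Qf m x y i j t')
      ≤ ∑ j ∈ range (A+1), (4 * T3b j + 2 * U j) := Finset.sum_le_sum claim1
  _ = 4 * (∑ j ∈ range (A+1), T3b j) + 2 * ∑ j ∈ range (A+1), U j := by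
      rw [Finset.sum_add_distrib, Finset.mul_sum, Finset.mul_sum]
  _ = 4 * (∑ j ∈ range (A+1), T3b j) + 2 * T1 := by rw [hUsum]
  _ ≤ 4 * (∑ j ∈ range (A+1), T3b j) + 4 * T1 :=
      add_le_add (le_refl _) (mul_le_mul_left (by norm_num : (2:ℝ≥0) ≤ 4) T1)
  _ = 4 * (T1 + ∑ j ∈ range (A+1), T3b j) := by ring

end VA

open VA in
theorem stmt9 (m : ℕ → ℕ) (hm : ∀ k, 2 ≤ m k) (B : ℕ) (hB : ∀ k, m k ≤ B) :
    ∃ c : ℝ≥0, 0 < c ∧ ∀ (A n : ℕ) (x y : ∀ j, ZMod (m j)),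
      Mf m A ≤ n → n < Mf m (A + 1) →
      (n : ℝ≥0) * ‖MKer m n x y‖₊ ≤
        c * ((∑ j ∈ Finset.range (A + 1), ∑ q ∈ Finset.range j, ∑ k ∈ Finset.Icc q (j - 1),
                ‖rr m (k + 1) (j - 1) x y‖₊ * (Mf m q : ℝ≥0) * ‖Dker m (Mf m k) x‖₊ *
                  ∑ v ∈ Finset.Icc 1 (m q - 1), ‖Dker m (Mf m k) (y - v • evec m q)‖₊) +
             (∑ j ∈ Finset.range (A + 1), ∑ q ∈ Finset.range j, ∑ k ∈ Finset.Icc q (j - 1),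
                ‖rr m (k + 1) (j - 1) x y‖₊ * (Mf m q : ℝ≥0) * ‖Dker m (Mf m k) y‖₊ *
                  ∑ v ∈ Finset.Icc 1 (m q - 1), ‖Dker m (Mf m k) (x - v • evec m q)‖₊) +
             (∑ j ∈ Finset.range (A + 1), ‖Dker m (Mf m j) x‖₊ *
                ∑ s ∈ Finset.range (j + 1), (Mf m s : ℝ≥0) *
                  ∑ i ∈ Finset.Icc s j, ∑ v ∈ Finset.Icc 1 (m s - 1),
                    ‖Dker m (Mf m i) (y - v • evec m s)‖₊) +
             ∑ j ∈ Finset.range (A + 1), ‖Dker m (Mf m j) y‖₊ *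
                ∑ s ∈ Finset.range (j + 1), (Mf m s : ℝ≥0) *
                  ∑ i ∈ Finset.Icc s j, ∑ v ∈ Finset.Icc 1 (m s - 1),
                    ‖Dker m (Mf m i) (x - v • evec m s)‖₊) := by
  refine ⟨4 * (B : ℝ≥0)^13 + 1, by positivity, ?_⟩
  intro A n x y hn1 hn2
  have hn0 : 0 < n := lt_of_lt_of_le (Mf_pos hm A) hn1
  have hnnz : ((n : ℕ) : ℝ≥0) ≠ 0 := by exact_mod_cast hn0.ne'
  have hnle : n ≤ Mf m (A+1) := le_of_lt hn2
  have hL : (n : ℝ≥0) * ‖MKer m n x y‖₊ = ‖∑ k ∈ range n, Dker m k x * Dker m k y‖₊ := by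
    have h1 : MKer m n x y = ((n : ℕ) : ℂ)⁻¹ * ∑ k ∈ range n, Dker m k x * Dker m k y := rfl
    rw [h1, nnnorm_mul, nnnorm_inv]
    have h2 : ‖((n : ℕ) : ℂ)‖₊ = ((n : ℕ) : ℝ≥0) := by simp
    rw [h2, ← mul_assoc, mul_inv_cancel₀ hnnz, one_mul]
  rw [hL]
  -- decomposition of the kernel sum
  have hdecomp : ∑ k ∈ range n, Dker m k x * Dker m k y
      = ∑ j ∈ range (A+1), ∑ i ∈ range (A+1),
          (Dker m (Mf m j) x * Dker m (Mf m i) y) *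
            ∑ k ∈ range n,
              (psi m (high m (j+1) k) x * ∑ p ∈ range (dg m j k), rad m j x ^ p) *
              (psi m (high m (i+1) k) y * ∑ p ∈ range (dg m i k), rad m i y ^ p) := by
    have hperk : ∀ k ∈ range n, Dker m k x * Dker m k y
        = ∑ j ∈ range (A+1), ∑ i ∈ range (A+1),
            (Dker m (Mf m j) x * Dker m (Mf m i) y) *
              ((psi m (high m (j+1) k) x * ∑ p ∈ range (dg m j k), rad m j x ^ p) *
               (psi m (high m (i+1) k) y * ∑ p ∈ range (dg m i k), rad m i y ^ p)) := by
      intro k hk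
      have hkA : k < Mf m (A+1) := lt_of_lt_of_le (Finset.mem_range.mp hk) hnle
      rw [Dker_eq_sum hm A x hkA, Dker_eq_sum hm A y hkA, Finset.sum_mul_sum]
      apply Finset.sum_congr rfl
      intro j _
      apply Finset.sum_congr rfl
      intro i _
      ring
    rw [Finset.sum_congr rfl hperk, Finset.sum_comm]
    apply Finset.sum_congr rfl
    intro j _
    rw [Finset.sum_comm]
    apply Finset.sum_congr rfl
    intro i _
    rw [Finset.mul_sum]
  rw [hdecomp]
  -- take norms
  have hnorm1 : ‖∑ j ∈ range (A+1), ∑ i ∈ range (A+1),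
      (Dker m (Mf m j) x * Dker m (Mf m i) y) *
        ∑ k ∈ range n,
          (psi m (high m (j+1) k) x * ∑ p ∈ range (dg m j k), rad m j x ^ p) *
          (psi m (high m (i+1) k) y * ∑ p ∈ range (dg m i k), rad m i y ^ p)‖₊
      ≤ ∑ j ∈ range (A+1), ∑ i ∈ range (A+1),
          (‖Dker m (Mf m j) x‖₊ * ‖Dker m (Mf m i) y‖₊) *
            ‖∑ k ∈ range n,
              (psi m (high m (j+1) k) x * ∑ p ∈ range (dg m j k), rad m j x ^ p) *
              (psi m (high m (i+1) k) y * ∑ p ∈ range (dg m i k), rad m i y ^ p)‖₊ := by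
    refine le_trans (nnnorm_sum_le _ _) ?_
    apply Finset.sum_le_sum
    intro j _
    refine le_trans (nnnorm_sum_le _ _) ?_
    apply Finset.sum_le_sum
    intro i _
    rw [nnnorm_mul, nnnorm_mul]
  refine le_trans hnorm1 ?_
  -- split the inner range
  have hsplit : ∑ j ∈ range (A+1), ∑ i ∈ range (A+1),
      (‖Dker m (Mf m j) x‖₊ * ‖Dker m (Mf m i) y‖₊) *
        ‖∑ k ∈ range n,
          (psi m (high m (j+1) k) x * ∑ p ∈ range (dg m j k), rad m j x ^ p) *
          (psi m (high m (i+1) k) y * ∑ p ∈ range (dg m i k), rad m i y ^ p)‖₊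
      = (∑ j ∈ range (A+1), ∑ i ∈ range (j+1),
          (‖Dker m (Mf m j) x‖₊ * ‖Dker m (Mf m i) y‖₊) *
            ‖∑ k ∈ range n,
              (psi m (high m (j+1) k) x * ∑ p ∈ range (dg m j k), rad m j x ^ p) *
              (psi m (high m (i+1) k) y * ∑ p ∈ range (dg m i k), rad m i y ^ p)‖₊)
        + ∑ j ∈ range (A+1), ∑ i ∈ Finset.Ioc j A,
          (‖Dker m (Mf m j) x‖₊ * ‖Dker m (Mf m i) y‖₊) *
            ‖∑ k ∈ range n,
              (psi m (high m (j+1) k) x * ∑ p ∈ range (dg m j k), rad m j x ^ p) *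
              (psi m (high m (i+1) k) y * ∑ p ∈ range (dg m i k), rad m i y ^ p)‖₊ := by
    rw [← Finset.sum_add_distrib]
    apply Finset.sum_congr rfl
    intro j hj
    exact sum_range_split _ (by have := Finset.mem_range.mp hj; omega)
  rw [hsplit]
  have hB1 : (1 : ℝ≥0) ≤ (B : ℝ≥0) := by
    have h0 := hm 0
    have h1 := hB 0
    exact_mod_cast (by omega : 1 ≤ B)
  -- first part
  have hP1 : ∑ j ∈ range (A+1), ∑ i ∈ range (j+1),
      (‖Dker m (Mf m j) x‖₊ * ‖Dker m (Mf m i) y‖₊) *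
        ‖∑ k ∈ range n,
          (psi m (high m (j+1) k) x * ∑ p ∈ range (dg m j k), rad m j x ^ p) *
          (psi m (high m (i+1) k) y * ∑ p ∈ range (dg m i k), rad m i y ^ p)‖₊
      ≤ (B : ℝ≥0)^13 * ∑ j ∈ range (A+1), ∑ i ∈ range (j+1),
          (‖Dker m (Mf m j) x‖₊ * ‖Dker m (Mf m i) y‖₊) *
            (∑ t' ∈ range (A+1), Qf m x y i j t') := by
    rw [Finset.mul_sum]
    apply Finset.sum_le_sum
    intro j hj
    rw [Finset.mul_sum]
    apply Finset.sum_le_sum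
    intro i hi
    have hjA : j ≤ A := by have := Finset.mem_range.mp hj; omega
    have hiA : i ≤ A := by
      have h1 := Finset.mem_range.mp hi
      omega
    by_cases hx : ∀ l, l < j → x l = 0
    · by_cases hy : ∀ l, l < i → y l = 0
      · calc (‖Dker m (Mf m j) x‖₊ * ‖Dker m (Mf m i) y‖₊) * ‖_‖₊
            ≤ (‖Dker m (Mf m j) x‖₊ * ‖Dker m (Mf m i) y‖₊) *
                ((B : ℝ≥0)^13 * ∑ t' ∈ range (A+1), Qf m x y i j t') :=
              mul_le_mul_right (T_bound hm hB hiA hjA hnle x y hx hy) _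
        _ = (B : ℝ≥0)^13 * ((‖Dker m (Mf m j) x‖₊ * ‖Dker m (Mf m i) y‖₊) *
              (∑ t' ∈ range (A+1), Qf m x y i j t')) := by ring
      · have h0 : ‖Dker m (Mf m i) y‖₊ = 0 := by rw [nn_Dker_Mf hm, if_neg hy]
        rw [h0]
        simp
    · have h0 : ‖Dker m (Mf m j) x‖₊ = 0 := by rw [nn_Dker_Mf hm, if_neg hx]
      rw [h0]
      simp
  -- second part : swap roles of x and y
  have hP2 : ∑ j ∈ range (A+1), ∑ i ∈ Finset.Ioc j A,
      (‖Dker m (Mf m j) x‖₊ * ‖Dker m (Mf m i) y‖₊) *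
        ‖∑ k ∈ range n,
          (psi m (high m (j+1) k) x * ∑ p ∈ range (dg m j k), rad m j x ^ p) *
          (psi m (high m (i+1) k) y * ∑ p ∈ range (dg m i k), rad m i y ^ p)‖₊
      ≤ (B : ℝ≥0)^13 * ∑ i ∈ range (A+1), ∑ j ∈ range (i+1),
          (‖Dker m (Mf m i) y‖₊ * ‖Dker m (Mf m j) x‖₊) *
            (∑ t' ∈ range (A+1), Qf m y x j i t') := by
    have hper : ∀ j ∈ range (A+1), ∀ i ∈ Finset.Ioc j A,
        (‖Dker m (Mf m j) x‖₊ * ‖Dker m (Mf m i) y‖₊) *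
          ‖∑ k ∈ range n,
            (psi m (high m (j+1) k) x * ∑ p ∈ range (dg m j k), rad m j x ^ p) *
            (psi m (high m (i+1) k) y * ∑ p ∈ range (dg m i k), rad m i y ^ p)‖₊
        ≤ (B : ℝ≥0)^13 * ((‖Dker m (Mf m i) y‖₊ * ‖Dker m (Mf m j) x‖₊) *
            (∑ t' ∈ range (A+1), Qf m y x j i t')) := by
      intro j hj i hi
      have hjA : j ≤ A := by have := Finset.mem_range.mp hj; omega
      have hiA : i ≤ A := (Finset.mem_Ioc.mp hi).2
      have hTswap : (∑ k ∈ range n,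
            (psi m (high m (j+1) k) x * ∑ p ∈ range (dg m j k), rad m j x ^ p) *
            (psi m (high m (i+1) k) y * ∑ p ∈ range (dg m i k), rad m i y ^ p))
          = ∑ k ∈ range n,
            (psi m (high m (i+1) k) y * ∑ p ∈ range (dg m i k), rad m i y ^ p) *
            (psi m (high m (j+1) k) x * ∑ p ∈ range (dg m j k), rad m j x ^ p) := by
        apply Finset.sum_congr rfl
        intro k _
        ring
      by_cases hx : ∀ l, l < j → x l = 0
      · by_cases hy : ∀ l, l < i → y l = 0
        · calc (‖Dker m (Mf m j) x‖₊ * ‖Dker m (Mf m i) y‖₊) * ‖_‖₊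
              = (‖Dker m (Mf m i) y‖₊ * ‖Dker m (Mf m j) x‖₊) *
                ‖∑ k ∈ range n,
                  (psi m (high m (i+1) k) y * ∑ p ∈ range (dg m i k), rad m i y ^ p) *
                  (psi m (high m (j+1) k) x * ∑ p ∈ range (dg m j k), rad m j x ^ p)‖₊ := by
                rw [← hTswap]
                ring
          _ ≤ (‖Dker m (Mf m i) y‖₊ * ‖Dker m (Mf m j) x‖₊) *
                ((B : ℝ≥0)^13 * ∑ t' ∈ range (A+1), Qf m y x j i t') :=
              mul_le_mul_right (T_bound hm hB hjA hiA hnle y x hy hx) _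
          _ = (B : ℝ≥0)^13 * ((‖Dker m (Mf m i) y‖₊ * ‖Dker m (Mf m j) x‖₊) *
                (∑ t' ∈ range (A+1), Qf m y x j i t')) := by ring
        · have h0 : ‖Dker m (Mf m i) y‖₊ = 0 := by rw [nn_Dker_Mf hm, if_neg hy]
          rw [h0]
          simp
      · have h0 : ‖Dker m (Mf m j) x‖₊ = 0 := by rw [nn_Dker_Mf hm, if_neg hx]
        rw [h0]
        simp
    calc ∑ j ∈ range (A+1), ∑ i ∈ Finset.Ioc j A,
        (‖Dker m (Mf m j) x‖₊ * ‖Dker m (Mf m i) y‖₊) *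
          ‖∑ k ∈ range n,
            (psi m (high m (j+1) k) x * ∑ p ∈ range (dg m j k), rad m j x ^ p) *
            (psi m (high m (i+1) k) y * ∑ p ∈ range (dg m i k), rad m i y ^ p)‖₊
        ≤ ∑ j ∈ range (A+1), ∑ i ∈ Finset.Ioc j A,
            (B : ℝ≥0)^13 * ((‖Dker m (Mf m i) y‖₊ * ‖Dker m (Mf m j) x‖₊) *
              (∑ t' ∈ range (A+1), Qf m y x j i t')) := by
          apply Finset.sum_le_sum
          intro j hj
          apply Finset.sum_le_sum
          intro i hi
          exact hper j hj i hi
    _ = ∑ i ∈ range (A+1), ∑ j ∈ range i,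
          (B : ℝ≥0)^13 * ((‖Dker m (Mf m i) y‖₊ * ‖Dker m (Mf m j) x‖₊) *
            (∑ t' ∈ range (A+1), Qf m y x j i t')) :=
        tri (fun j i => (B : ℝ≥0)^13 * ((‖Dker m (Mf m i) y‖₊ * ‖Dker m (Mf m j) x‖₊) *
          (∑ t' ∈ range (A+1), Qf m y x j i t'))) A
    _ ≤ ∑ i ∈ range (A+1), ∑ j ∈ range (i+1),
          (B : ℝ≥0)^13 * ((‖Dker m (Mf m i) y‖₊ * ‖Dker m (Mf m j) x‖₊) *
            (∑ t' ∈ range (A+1), Qf m y x j i t')) := by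
        apply Finset.sum_le_sum
        intro i _
        apply Finset.sum_le_sum_of_subset
        exact Finset.range_subset_range.mpr (by omega)
    _ = (B : ℝ≥0)^13 * ∑ i ∈ range (A+1), ∑ j ∈ range (i+1),
          (‖Dker m (Mf m i) y‖₊ * ‖Dker m (Mf m j) x‖₊) *
            (∑ t' ∈ range (A+1), Qf m y x j i t') := by
        rw [Finset.mul_sum]
        apply Finset.sum_congr rfl
        intro i _
        rw [Finset.mul_sum]
  -- apply master to both parts
  refine le_trans (add_le_add hP1 hP2) ?_
  have hM1 := master hm A x y
  have hM2 := master hm A y x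
  have hT2eq : (∑ J ∈ range (A+1), ∑ q ∈ range J, ∑ k ∈ Finset.Icc q (J-1),
        ‖rr m (k+1) (J-1) y x‖₊ * (Mf m q : ℝ≥0) * ‖Dker m (Mf m k) y‖₊ *
          ∑ v ∈ Finset.Icc 1 (m q - 1), ‖Dker m (Mf m k) (x - v • evec m q)‖₊)
      = ∑ J ∈ range (A+1), ∑ q ∈ range J, ∑ k ∈ Finset.Icc q (J-1),
        ‖rr m (k+1) (J-1) x y‖₊ * (Mf m q : ℝ≥0) * ‖Dker m (Mf m k) y‖₊ *
          ∑ v ∈ Finset.Icc 1 (m q - 1), ‖Dker m (Mf m k) (x - v • evec m q)‖₊ := by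
    apply Finset.sum_congr rfl
    intro J _
    apply Finset.sum_congr rfl
    intro q _
    apply Finset.sum_congr rfl
    intro k _
    rw [rr_comm]
  rw [hT2eq] at hM2
  set S1 := ∑ j ∈ Finset.range (A + 1), ∑ q ∈ Finset.range j, ∑ k ∈ Finset.Icc q (j - 1),
      ‖rr m (k + 1) (j - 1) x y‖₊ * (Mf m q : ℝ≥0) * ‖Dker m (Mf m k) x‖₊ *
        ∑ v ∈ Finset.Icc 1 (m q - 1), ‖Dker m (Mf m k) (y - v • evec m q)‖₊ with hS1
  set S2 := ∑ j ∈ Finset.range (A + 1), ∑ q ∈ Finset.range j, ∑ k ∈ Finset.Icc q (j - 1),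
      ‖rr m (k + 1) (j - 1) x y‖₊ * (Mf m q : ℝ≥0) * ‖Dker m (Mf m k) y‖₊ *
        ∑ v ∈ Finset.Icc 1 (m q - 1), ‖Dker m (Mf m k) (x - v • evec m q)‖₊ with hS2
  set S3 := ∑ j ∈ Finset.range (A + 1), ‖Dker m (Mf m j) x‖₊ *
      ∑ s ∈ Finset.range (j + 1), (Mf m s : ℝ≥0) *
        ∑ i ∈ Finset.Icc s j, ∑ v ∈ Finset.Icc 1 (m s - 1),
          ‖Dker m (Mf m i) (y - v • evec m s)‖₊ with hS3
  set S4 := ∑ j ∈ Finset.range (A + 1), ‖Dker m (Mf m j) y‖₊ *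
      ∑ s ∈ Finset.range (j + 1), (Mf m s : ℝ≥0) *
        ∑ i ∈ Finset.Icc s j, ∑ v ∈ Finset.Icc 1 (m s - 1),
          ‖Dker m (Mf m i) (x - v • evec m s)‖₊ with hS4
  calc (B : ℝ≥0)^13 * (∑ j ∈ range (A+1), ∑ i ∈ range (j+1),
        (‖Dker m (Mf m j) x‖₊ * ‖Dker m (Mf m i) y‖₊) * (∑ t' ∈ range (A+1), Qf m x y i j t'))
      + (B : ℝ≥0)^13 * (∑ i ∈ range (A+1), ∑ j ∈ range (i+1),
        (‖Dker m (Mf m i) y‖₊ * ‖Dker m (Mf m j) x‖₊) * (∑ t' ∈ range (A+1), Qf m y x j i t'))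
      ≤ (B : ℝ≥0)^13 * (4 * (S1 + S3)) + (B : ℝ≥0)^13 * (4 * (S2 + S4)) :=
        add_le_add (mul_le_mul_right hM1 _) (mul_le_mul_right hM2 _)
  _ = (4 * (B : ℝ≥0)^13) * (S1 + S2 + S3 + S4) := by ring
  _ ≤ (4 * (B : ℝ≥0)^13 + 1) * (S1 + S2 + S3 + S4) :=
      mul_le_mul_left le_self_add _
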